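/- arXiv:1407.6650 — 5 statements merged into one kernel-verified Lean document; each statement's English description precedes it below -/
import Mathlib

section
/- In the low temperature regime with parameters k and c (for any fixed k, c > 0), there exist a constant C > 0 and L₀ such that for all integers L ≥ L₀, the total variation distance between the PCA stationary measure and the Ising Gibbs measure satisfies ‖π_PCA − π_G‖_TV ≤ C (L^{-(c/2 − 1)} + L^{-(2k − 2)}). -/
open Real Filter MeasureTheory

noncomputable section

/-- A site of the 2d discrete torus `(ℤ/Lℤ)²`. -/
abbrev Site (L : ℕ) := ZMod L × ZMod L

/-- A spin configuration on the torus, `true = +1`, `false = -1`. -/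
abbrev Cfg (L : ℕ) := Site L → Bool

/-- The real spin value of a Boolean spin. -/
def spin (b : Bool) : ℝ := if b then 1 else -1

/-- The up neighbor. -/
def upN {L : ℕ} (x : Site L) : Site L := (x.1, x.2 + 1)
/-- The right neighbor. -/
def rtN {L : ℕ} (x : Site L) : Site L := (x.1 + 1, x.2)
/-- The down neighbor. -/
def dnN {L : ℕ} (x : Site L) : Site L := (x.1, x.2 - 1)
/-- The left neighbor. -/
def lfN {L : ℕ} (x : Site L) : Site L := (x.1 - 1, x.2)

/-- The pair Hamiltonian `H(σ,τ) = −∑_x [J σ_x (τ_{x^u} + τ_{x^r}) + q σ_x τ_x]`. -/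
def pairH (L : ℕ) [NeZero L] (J q : ℝ) (σ τ : Cfg L) : ℝ :=
  - ∑ x : Site L, (J * spin (σ x) * (spin (τ (upN x)) + spin (τ (rtN x)))
      + q * spin (σ x) * spin (τ x))

/-- The normalization `Z_σ = ∑_τ e^{−H(σ,τ)}`. -/
def Zconf (L : ℕ) [NeZero L] (J q : ℝ) (σ : Cfg L) : ℝ :=
  ∑ τ : Cfg L, Real.exp (-(pairH L J q σ τ))

/-- The PCA transition probabilities `P(σ,τ) = e^{−H(σ,τ)}/Z_σ`. -/
def Ptrans (L : ℕ) [NeZero L] (J q : ℝ) (σ τ : Cfg L) : ℝ :=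
  Real.exp (-(pairH L J q σ τ)) / Zconf L J q σ

/-- `Z_PCA = ∑_σ Z_σ`. -/
def Zpca (L : ℕ) [NeZero L] (J q : ℝ) : ℝ := ∑ σ : Cfg L, Zconf L J q σ

/-- The PCA stationary measure `π_PCA(σ) = Z_σ / Z_PCA`. -/
def piPCA (L : ℕ) [NeZero L] (J q : ℝ) (σ : Cfg L) : ℝ := Zconf L J q σ / Zpca L J q

/-- The Ising Hamiltonian `H_G(σ) = −J ∑_{(x,y)} σ_x σ_y`, the sum over (unordered)
nearest-neighbor pairs of the torus, each pair being counted once via its up/right bond. -/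
def isingH (L : ℕ) [NeZero L] (J : ℝ) (σ : Cfg L) : ℝ :=
  - J * ∑ x : Site L, spin (σ x) * (spin (σ (upN x)) + spin (σ (rtN x)))

/-- The Ising partition function. -/
def Zg (L : ℕ) [NeZero L] (J : ℝ) : ℝ := ∑ σ : Cfg L, Real.exp (-(isingH L J σ))

/-- The Ising Gibbs measure `π_G(σ) = e^{−H_G(σ)}/Z_G`. -/
def piG (L : ℕ) [NeZero L] (J : ℝ) (σ : Cfg L) : ℝ := Real.exp (-(isingH L J σ)) / Zg L J

/-- Total variation distance between two measures on configuration space. -/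
def tv (L : ℕ) [NeZero L] (μ ν : Cfg L → ℝ) : ℝ := (1/2) * ∑ σ : Cfg L, |μ σ - ν σ|

/-- The all-plus configuration. -/
def plusCfg (L : ℕ) : Cfg L := fun _ => true
/-- The all-minus configuration. -/
def minusCfg (L : ℕ) : Cfg L := fun _ => false

namespace S0A
open Finset

variable {L : ℕ} [NeZero L]

def upE (L : ℕ) [NeZero L] : Site L ≃ Site L where
  toFun := upN
  invFun := dnN
  left_inv := fun x => by simp [upN, dnN]
  right_inv := fun x => by simp [upN, dnN]

def rtE (L : ℕ) [NeZero L] : Site L ≃ Site L where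
  toFun := rtN
  invFun := lfN
  left_inv := fun x => by simp [rtN, lfN]
  right_inv := fun x => by simp [rtN, lfN]

/-- coefficient of `spin (τ y)` in `-pairH`. -/
def Ky (J q : ℝ) (σ : Cfg L) (y : Site L) : ℝ :=
  J * (spin (σ (dnN y)) + spin (σ (lfN y))) + q * spin (σ y)

lemma neg_pairH (J q : ℝ) (σ τ : Cfg L) :
    -(pairH L J q σ τ) = ∑ y : Site L, Ky J q σ y * spin (τ y) := by
  unfold pairH
  rw [neg_neg]
  have h1 : ∀ x : Site L,
      J * spin (σ x) * (spin (τ (upN x)) + spin (τ (rtN x))) + q * spin (σ x) * spin (τ x)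
      = J * spin (σ x) * spin (τ (upN x)) + J * spin (σ x) * spin (τ (rtN x))
        + q * spin (σ x) * spin (τ x) := fun x => by ring
  simp_rw [h1]
  rw [Finset.sum_add_distrib, Finset.sum_add_distrib]
  have h2 : ∑ x : Site L, J * spin (σ x) * spin (τ (upN x))
      = ∑ y : Site L, J * spin (σ (dnN y)) * spin (τ y) := by
    apply Fintype.sum_equiv (upE L)
    intro x
    simp [upE, upN, dnN]
  have h3 : ∑ x : Site L, J * spin (σ x) * spin (τ (rtN x))
      = ∑ y : Site L, J * spin (σ (lfN y)) * spin (τ y) := by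
    apply Fintype.sum_equiv (rtE L)
    intro x
    simp [rtE, rtN, lfN]
  rw [h2, h3, ← Finset.sum_add_distrib, ← Finset.sum_add_distrib]
  apply Finset.sum_congr rfl
  intro y _
  unfold Ky
  ring

lemma neg_isingH (J : ℝ) (σ : Cfg L) :
    -(isingH L J σ) = ∑ y : Site L, J * spin (σ y) * (spin (σ (dnN y)) + spin (σ (lfN y))) := by
  unfold isingH
  rw [neg_mul, neg_neg, Finset.mul_sum]
  have h1 : ∀ x : Site L,
      J * (spin (σ x) * (spin (σ (upN x)) + spin (σ (rtN x))))
      = J * spin (σ x) * spin (σ (upN x)) + J * spin (σ x) * spin (σ (rtN x)) :=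
    fun x => by ring
  simp_rw [h1]
  rw [Finset.sum_add_distrib]
  have h2 : ∑ x : Site L, J * spin (σ x) * spin (σ (upN x))
      = ∑ y : Site L, J * spin (σ (dnN y)) * spin (σ y) := by
    apply Fintype.sum_equiv (upE L)
    intro x
    simp [upE, upN, dnN]
  have h3 : ∑ x : Site L, J * spin (σ x) * spin (σ (rtN x))
      = ∑ y : Site L, J * spin (σ (lfN y)) * spin (σ y) := by
    apply Fintype.sum_equiv (rtE L)
    intro x
    simp [rtE, rtN, lfN]
  rw [h2, h3, ← Finset.sum_add_distrib]
  apply Finset.sum_congr rfl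
  intro y _
  ring

lemma Zconf_eq_prod (J q : ℝ) (σ : Cfg L) :
    Zconf L J q σ = ∏ y : Site L, (exp (Ky J q σ y) + exp (-(Ky J q σ y))) := by
  unfold Zconf
  simp_rw [neg_pairH, Real.exp_sum]
  rw [← Fintype.prod_sum (fun (y : Site L) (b : Bool) => exp (Ky J q σ y * spin b))]
  apply Finset.prod_congr rfl
  intro y _
  rw [Fintype.sum_bool]
  simp [spin]

end S0A
namespace S0A
open Finset
set_option linter.unusedSectionVars false

variable {L : ℕ} [NeZero L]

def AD (J q : ℝ) : ℝ := exp (2*J+q) + exp (-(2*J+q))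

lemma AD_pos (J q : ℝ) : 0 < AD J q := by unfold AD; positivity

def wp (J q : ℝ) (σ : Cfg L) (y : Site L) : ℝ :=
  (exp (Ky J q σ y) + exp (-(Ky J q σ y))) / AD J q

def Wp (J q : ℝ) (σ : Cfg L) : ℝ := ∏ y : Site L, wp J q σ y

def wg (J : ℝ) (σ : Cfg L) (y : Site L) : ℝ :=
  exp (J * spin (σ y) * (spin (σ (dnN y)) + spin (σ (lfN y))) - 2*J)

def Wg (J : ℝ) (σ : Cfg L) : ℝ := ∏ y : Site L, wg J σ y

def ub (J : ℝ) : ℝ := 4 * exp (-(2*J))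
def vb (J q : ℝ) : ℝ := exp (-(2*q)) + exp (-(4*J))

def hwt (J q : ℝ) (σ : Cfg L) (y : Site L) : ℝ :=
  (if σ (dnN y) = σ (lfN y) then 1 else ub J) * (if σ y = σ (dnN y) then 1 else vb J q)

def Wb (J q : ℝ) (σ : Cfg L) : ℝ := ∏ y : Site L, hwt J q σ y

lemma wp_nonneg (J q : ℝ) (σ : Cfg L) (y : Site L) : 0 ≤ wp J q σ y := by
  unfold wp AD; positivity

lemma wg_nonneg (J : ℝ) (σ : Cfg L) (y : Site L) : 0 ≤ wg J σ y := (Real.exp_pos _).le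

lemma ub_pos (J : ℝ) : 0 < ub J := by unfold ub; positivity
lemma vb_pos (J q : ℝ) : 0 < vb J q := by unfold vb; positivity

lemma hwt_nonneg (J q : ℝ) (σ : Cfg L) (y : Site L) : 0 ≤ hwt J q σ y := by
  unfold hwt
  have h1 := (ub_pos J).le
  have h2 := (vb_pos J q).le
  split <;> split <;> norm_num <;> positivity

lemma exp2_le {x1 x2 y1 y2 : ℝ} (h1 : x1 ≤ y1) (h2 : x2 ≤ y2) :
    exp x1 + exp x2 ≤ exp y1 + exp y2 :=
  add_le_add (Real.exp_le_exp.mpr h1) (Real.exp_le_exp.mpr h2)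

lemma exp2_le' {x1 x2 y1 y2 : ℝ} (h1 : x1 ≤ y2) (h2 : x2 ≤ y1) :
    exp x1 + exp x2 ≤ exp y1 + exp y2 := by
  have := add_le_add (Real.exp_le_exp.mpr h1) (Real.exp_le_exp.mpr h2); linarith

lemma wg_le_wp (J q : ℝ) (hJ : 0 ≤ J) (hq : 0 ≤ q) (σ : Cfg L) (y : Site L) :
    wg J σ y ≤ wp J q σ y := by
  have hA := AD_pos J q
  rw [wg, wp, le_div_iff₀ hA]
  unfold Ky AD
  cases hd : σ (dnN y) <;> cases hl : σ (lfN y) <;> cases hy : σ y <;>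
    simp only [spin, if_true, if_false, Bool.false_eq_true, ite_true, ite_false] <;>
    rw [mul_add, ← Real.exp_add, ← Real.exp_add] <;>
    first
      | exact exp2_le (by linarith) (by linarith)
      | exact exp2_le' (by linarith) (by linarith)

lemma flipcase (J q : ℝ) (hJ : 0 ≤ J) :
    exp (2*J-q) + exp (-(2*J-q)) ≤ vb J q * AD J q := by
  have hexp : vb J q * AD J q
      = exp (2*J-q) + exp (-(2*J)-3*q) + (exp (-(2*J)+q) + exp (-(6*J)-q)) := by
    unfold vb AD
    rw [add_mul, mul_add, mul_add, ← Real.exp_add, ← Real.exp_add, ← Real.exp_add,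
      ← Real.exp_add, show -(2*q)+(2*J+q) = 2*J-q by ring,
      show -(2*q)+-(2*J+q) = -(2*J)-3*q by ring,
      show -(4*J)+(2*J+q) = -(2*J)+q by ring,
      show -(4*J)+-(2*J+q) = -(6*J)-q by ring]
  rw [hexp, show -(2*J-q) = -(2*J)+q by ring]
  linarith [Real.exp_pos (-(2*J)-3*q), Real.exp_pos (-(6*J)-q)]

lemma mixedcase (J q : ℝ) (hq : 0 ≤ q) (hv2 : 1/2 ≤ vb J q) :
    exp q + exp (-q) ≤ (ub J * vb J q) * AD J q := by
  have hA : exp (-(2*J)) * AD J q = exp q + exp (-(4*J)-q) := by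
    unfold AD
    rw [mul_add, ← Real.exp_add, ← Real.exp_add, show -(2*J)+(2*J+q) = q by ring,
      show -(2*J)+-(2*J+q) = -(4*J)-q by ring]
  have h2 : exp (-q) ≤ exp q := Real.exp_le_exp.mpr (by linarith)
  have hub : 2*exp (-(2*J)) ≤ ub J * vb J q := by
    unfold ub; nlinarith [Real.exp_pos (-(2*J))]
  calc exp q + exp (-q) ≤ 2*(exp q + exp (-(4*J)-q)) := by
        linarith [Real.exp_pos (-(4*J)-q)]
    _ = 2*exp (-(2*J)) * AD J q := by rw [mul_assoc, hA]
    _ ≤ (ub J * vb J q) * AD J q := mul_le_mul_of_nonneg_right hub (AD_pos J q).le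

lemma wp_le_hwt (J q : ℝ) (hJ : 0 ≤ J) (hq : 0 ≤ q) (hv2 : 1/2 ≤ vb J q)
    (hv1 : vb J q ≤ 1) (σ : Cfg L) (y : Site L) : wp J q σ y ≤ hwt J q σ y := by
  have hA := AD_pos J q
  have hub := ub_pos J
  have hvb := vb_pos J q
  have hmix' : exp q + exp (-q) ≤ (ub J * 1) * AD J q := by
    have h1 := mixedcase J q hq hv2
    have h2 : (ub J * 1) * AD J q - (ub J * vb J q) * AD J q
        = (ub J * (1 - vb J q)) * AD J q := by ring
    have h3 : (0:ℝ) ≤ (ub J * (1 - vb J q)) * AD J q :=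
      mul_nonneg (mul_nonneg hub.le (by linarith)) hA.le
    linarith
  rw [wp, div_le_iff₀ hA]
  unfold Ky hwt AD
  cases hd : σ (dnN y) <;> cases hl : σ (lfN y) <;> cases hy : σ y <;>
    simp only [spin, hd, hl, hy, if_true, if_false, Bool.false_eq_true, Bool.true_eq_false,
      ite_true, ite_false, one_mul, mul_one]
  · -- f f f : K = -(2J+q), weight 1
    rw [show J*(-1+-1)+q*(-1) = -(2*J+q) by ring, neg_neg]; linarith
  · -- f f t : K = -(2J-q), weight vb
    rw [show J*(-1+-1)+q = -(2*J-q) by ring, neg_neg]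
    have := flipcase J q hJ
    have heq : vb J q * (exp (2*J+q) + exp (-(2*J+q))) = vb J q * AD J q := by unfold AD; ring
    rw [heq]; linarith
  · -- f t f : K = -q, mixed, σy = σdn: weight ub
    rw [show J*(-1+1)+q*(-1) = -q by ring, neg_neg]
    have heq : ub J * (exp (2*J+q) + exp (-(2*J+q))) = (ub J * 1) * AD J q := by unfold AD; ring
    rw [heq]; linarith
  · -- f t t : K = q, mixed, σy ≠ σdn: weight ub * vb
    rw [show J*(-1+1)+q = q by ring]
    have := mixedcase J q hq hv2
    have heq : ub J * vb J q * (exp (2*J+q) + exp (-(2*J+q))) = (ub J * vb J q) * AD J q := by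
      unfold AD; ring
    rw [heq]; linarith
  · -- t f f : K = -q, mixed, σy ≠ σdn: weight ub * vb
    rw [show J*(1+-1)+q*(-1) = -q by ring, neg_neg]
    have := mixedcase J q hq hv2
    have heq : ub J * vb J q * (exp (2*J+q) + exp (-(2*J+q))) = (ub J * vb J q) * AD J q := by
      unfold AD; ring
    rw [heq]; linarith
  · -- t f t : K = q, mixed, σy = σdn: weight ub
    rw [show J*(1+-1)+q = q by ring]
    have heq : ub J * (exp (2*J+q) + exp (-(2*J+q))) = (ub J * 1) * AD J q := by unfold AD; ring
    rw [heq]; linarith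
  · -- t t f : K = 2J-q, weight vb
    rw [show J*(1+1)+q*(-1) = 2*J-q by ring]
    have := flipcase J q hJ
    have heq : vb J q * (exp (2*J+q) + exp (-(2*J+q))) = vb J q * AD J q := by unfold AD; ring
    rw [heq]; linarith
  · -- t t t : K = 2J+q, weight 1
    rw [show J*(1+1)+q = 2*J+q by ring]

lemma wp_const (J q : ℝ) (b : Bool) (y : Site L) :
    wp J q (fun _ => b) y = 1 := by
  have hA := AD_pos J q
  rw [wp, div_eq_one_iff_eq hA.ne']
  unfold Ky AD
  cases b <;>
    simp only [spin, ite_true, ite_false, Bool.false_eq_true]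
  · rw [show J*(-1+-1)+q*(-1) = -(2*J+q) by ring, neg_neg]; ring
  · rw [show J*(1+1)+q*1 = 2*J+q by ring]

lemma wg_const (J : ℝ) (b : Bool) (y : Site L) : wg J (fun _ => b) y = 1 := by
  rw [wg]
  cases b <;>
    simp only [spin, ite_true, ite_false, Bool.false_eq_true]
  · rw [show J * -1 * (-1 + -1) - 2*J = 0 by ring, Real.exp_zero]
  · rw [show J * 1 * (1 + 1) - 2*J = 0 by ring, Real.exp_zero]

end S0A
namespace S0A
open Finset

variable {L : ℕ} [NeZero L]

lemma split_pair {α : Type*} [Fintype α] [DecidableEq α] (f : α → ℝ) {a b : α} (hab : a ≠ b) :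
    ∑ x, f x = f a + f b + ∑ x ∈ univ \ {a, b}, f x := by
  rw [← Finset.sum_sdiff (subset_univ ({a, b} : Finset α)), Finset.sum_pair hab]
  ring

lemma plus_ne_minus : plusCfg L ≠ minusCfg L := by
  intro h
  have := congrFun h (0, 0)
  simp [plusCfg, minusCfg] at this

lemma Zconf_eq (J q : ℝ) (σ : Cfg L) :
    Zconf L J q σ = AD J q ^ (Fintype.card (Site L)) * Wp J q σ := by
  rw [Zconf_eq_prod]
  unfold Wp wp
  rw [Finset.prod_div_distrib, Finset.prod_const, Finset.card_univ]
  have h : (0:ℝ) < AD J q ^ (Fintype.card (Site L)) := pow_pos (AD_pos J q) _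
  rw [eq_comm, mul_comm, div_mul_cancel₀ _ h.ne']

lemma expIsing_eq (J : ℝ) (σ : Cfg L) :
    exp (-(isingH L J σ)) = exp (2*J) ^ (Fintype.card (Site L)) * Wg J σ := by
  rw [neg_isingH, Real.exp_sum]
  unfold Wg wg
  simp_rw [Real.exp_sub]
  rw [Finset.prod_div_distrib, Finset.prod_const, Finset.card_univ]
  have h : (0:ℝ) < exp (2*J) ^ (Fintype.card (Site L)) := pow_pos (Real.exp_pos _) _
  rw [eq_comm, mul_comm, div_mul_cancel₀ _ h.ne']

lemma piPCA_eq (J q : ℝ) (σ : Cfg L) :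
    piPCA L J q σ = Wp J q σ / (∑ σ' : Cfg L, Wp J q σ') := by
  unfold piPCA Zpca
  simp_rw [Zconf_eq]
  rw [← Finset.mul_sum, mul_div_mul_left _ _ (pow_ne_zero _ (AD_pos J q).ne')]

lemma piG_eq (J : ℝ) (σ : Cfg L) :
    piG L J σ = Wg J σ / (∑ σ' : Cfg L, Wg J σ') := by
  unfold piG Zg
  simp_rw [expIsing_eq]
  rw [← Finset.mul_sum, mul_div_mul_left _ _ (pow_ne_zero _ (Real.exp_pos _).ne')]

lemma Wp_nonneg (J q : ℝ) (σ : Cfg L) : 0 ≤ Wp J q σ :=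
  Finset.prod_nonneg fun y _ => wp_nonneg J q σ y

lemma Wg_nonneg (J : ℝ) (σ : Cfg L) : 0 ≤ Wg J σ :=
  Finset.prod_nonneg fun y _ => wg_nonneg J σ y

lemma Wp_const (J q : ℝ) (b : Bool) : Wp J q (fun _ : Site L => b) = 1 := by
  unfold Wp; rw [Finset.prod_congr rfl fun y _ => wp_const J q b y, Finset.prod_const_one]

lemma Wg_const (J : ℝ) (b : Bool) : Wg J (fun _ : Site L => b) = 1 := by
  unfold Wg; rw [Finset.prod_congr rfl fun y _ => wg_const J b y, Finset.prod_const_one]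

lemma Wg_le_Wp (J q : ℝ) (hJ : 0 ≤ J) (hq : 0 ≤ q) (σ : Cfg L) : Wg J σ ≤ Wp J q σ :=
  Finset.prod_le_prod (fun y _ => wg_nonneg J σ y) (fun y _ => wg_le_wp J q hJ hq σ y)

lemma Wp_le_Wb (J q : ℝ) (hJ : 0 ≤ J) (hq : 0 ≤ q) (hv2 : 1/2 ≤ vb J q)
    (hv1 : vb J q ≤ 1) (σ : Cfg L) : Wp J q σ ≤ Wb J q σ :=
  Finset.prod_le_prod (fun y _ => wp_nonneg J q σ y)
    (fun y _ => wp_le_hwt J q hJ hq hv2 hv1 σ y)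

lemma sum_Wp_ge_two (J q : ℝ) : (2:ℝ) ≤ ∑ σ' : Cfg L, Wp J q σ' := by
  rw [split_pair (Wp J q) (plus_ne_minus (L := L))]
  have h1 : Wp J q (plusCfg L) = 1 := Wp_const J q true
  have h2 : Wp J q (minusCfg L) = 1 := Wp_const J q false
  have h3 : 0 ≤ ∑ σ' ∈ univ \ {plusCfg L, minusCfg L}, Wp J q σ' :=
    Finset.sum_nonneg fun σ' _ => Wp_nonneg J q σ'
  rw [h1, h2]; linarith

lemma sum_Wg_ge_two (J : ℝ) : (2:ℝ) ≤ ∑ σ' : Cfg L, Wg J σ' := by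
  rw [split_pair (Wg J) (plus_ne_minus (L := L))]
  have h1 : Wg J (plusCfg L) = 1 := Wg_const J true
  have h2 : Wg J (minusCfg L) = 1 := Wg_const J false
  have h3 : 0 ≤ ∑ σ' ∈ univ \ {plusCfg L, minusCfg L}, Wg J σ' :=
    Finset.sum_nonneg fun σ' _ => Wg_nonneg J σ'
  rw [h1, h2]; linarith

/-- Main reduction: the TV distance is at most the excess `Wb`-mass of nonconstant
configurations. -/
lemma tv_le_main (J q : ℝ) (hJ : 0 ≤ J) (hq : 0 ≤ q) (hv2 : 1/2 ≤ vb J q)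
    (hv1 : vb J q ≤ 1) :
    tv L (piPCA L J q) (piG L J)
      ≤ ∑ σ ∈ univ \ {plusCfg L, minusCfg L}, Wb J q σ := by
  set SP := ∑ σ' : Cfg L, Wp J q σ' with hSPdef
  set SG := ∑ σ' : Cfg L, Wg J σ' with hSGdef
  have hSP2 : (2:ℝ) ≤ SP := sum_Wp_ge_two J q
  have hSG2 : (2:ℝ) ≤ SG := sum_Wg_ge_two J
  have hSP : (0:ℝ) < SP := by linarith
  have hSG : (0:ℝ) < SG := by linarith
  set D := (univ : Finset (Cfg L)) \ {plusCfg L, minusCfg L} with hD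
  set Δ := ∑ σ : Cfg L, |Wp J q σ - Wg J σ| with hΔdef
  have hΔ0 : 0 ≤ Δ := Finset.sum_nonneg fun σ _ => abs_nonneg _
  -- Δ equals the sum over nonconstant configurations, and is at most ∑_D Wb
  have hΔD : Δ ≤ ∑ σ ∈ D, Wb J q σ := by
    have e1 : Δ = ∑ σ ∈ D, |Wp J q σ - Wg J σ| := by
      rw [hΔdef, split_pair (fun σ => |Wp J q σ - Wg J σ|) (plus_ne_minus (L := L))]
      have c1 : Wp J q (plusCfg L) = 1 := Wp_const J q true
      have c2 : Wp J q (minusCfg L) = 1 := Wp_const J q false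
      have c3 : Wg J (plusCfg L) = 1 := Wg_const J true
      have c4 : Wg J (minusCfg L) = 1 := Wg_const J false
      simp only [c1, c2, c3, c4, sub_self, abs_zero, zero_add]
      rw [hD]
    rw [e1]
    apply Finset.sum_le_sum
    intro σ _
    have h1 := Wg_le_Wp J q hJ hq σ
    have h2 := Wg_nonneg J σ
    have h3 := Wp_le_Wb J q hJ hq hv2 hv1 σ
    rw [abs_of_nonneg (by linarith)]
    linarith
  -- |SG - SP| ≤ Δ
  have hSdiff : |SG - SP| ≤ Δ := by
    have : SG - SP = ∑ σ : Cfg L, (Wg J σ - Wp J q σ) := by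
      rw [hSPdef, hSGdef, Finset.sum_sub_distrib]
    rw [this]
    refine le_trans (Finset.abs_sum_le_sum_abs _ _) ?_
    apply Finset.sum_le_sum
    intro σ _
    rw [abs_sub_comm]
  -- pointwise bound and summation
  have hpt : ∀ σ : Cfg L, |piPCA L J q σ - piG L J σ|
      ≤ |Wp J q σ - Wg J σ| / SP + Wg J σ * |SG - SP| / (SP * SG) := by
    intro σ
    rw [piPCA_eq, piG_eq, ← hSPdef, ← hSGdef]
    have key : Wp J q σ / SP - Wg J σ / SG
        = (Wp J q σ - Wg J σ) / SP + (Wg J σ * (SG - SP)) / (SP * SG) := by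
      field_simp
      ring
    rw [key]
    refine le_trans (abs_add_le _ _) ?_
    rw [abs_div, abs_div, abs_of_pos hSP, abs_of_pos (by positivity : (0:ℝ) < SP * SG),
      abs_mul, abs_of_nonneg (Wg_nonneg J σ)]
  have hsum : ∑ σ : Cfg L, |piPCA L J q σ - piG L J σ|
      ≤ Δ / SP + |SG - SP| / SP := by
    refine le_trans (Finset.sum_le_sum fun σ _ => hpt σ) ?_
    rw [Finset.sum_add_distrib, ← Finset.sum_div, ← hΔdef]
    have : ∑ σ : Cfg L, Wg J σ * |SG - SP| / (SP * SG)
        = SG * |SG - SP| / (SP * SG) := by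
      rw [← Finset.sum_div, ← Finset.sum_mul, ← hSGdef]
    rw [this]
    have : SG * |SG - SP| / (SP * SG) = |SG - SP| / SP := by
      field_simp
    rw [this]
  -- assemble
  unfold tv
  have h1 : Δ / SP ≤ Δ / 2 := by gcongr
  have h2 : |SG - SP| / SP ≤ Δ / 2 := by
    refine le_trans ?_ (by gcongr : Δ / SP ≤ Δ / 2)
    gcongr
  calc (1/2 : ℝ) * ∑ σ : Cfg L, |piPCA L J q σ - piG L J σ|
      ≤ (1/2) * (Δ / SP + |SG - SP| / SP) := by linarith [hsum]
    _ ≤ (1/2) * (Δ / 2 + Δ / 2) := by linarith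
    _ = Δ / 2 := by ring
    _ ≤ Δ := by linarith
    _ ≤ ∑ σ ∈ D, Wb J q σ := hΔD

end S0A
namespace S0A
open Finset

variable {L : ℕ} [NeZero L]

/-- Horizontal (within-layer) weight. -/
def om (u : ℝ) (s : ZMod L → Bool) : ℝ := ∏ i : ZMod L, (if s i = s (i-1) then 1 else u)

/-- Interface (between-layer) weight. -/
def Vv (v : ℝ) (s s' : ZMod L → Bool) : ℝ := ∏ i : ZMod L, (if s' i = s i then 1 else v)

/-- Constant layer. -/
def ct (L : ℕ) (b : Bool) : ZMod L → Bool := fun _ => b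

lemma ct_ne : ct L true ≠ ct L false := by
  intro h
  have := congrFun h 0
  simp [ct] at this

lemma om_nonneg {u : ℝ} (hu : 0 ≤ u) (s : ZMod L → Bool) : 0 ≤ om u s :=
  Finset.prod_nonneg fun i _ => by split <;> norm_num <;> exact hu

lemma om_ct (u : ℝ) (b : Bool) : om u (ct L b) = 1 := by
  unfold om ct; simp

lemma Vv_nonneg {v : ℝ} (hv : 0 ≤ v) (s s' : ZMod L → Bool) : 0 ≤ Vv v s s' :=
  Finset.prod_nonneg fun i _ => by split <;> norm_num <;> exact hv

lemma Vv_le_one {v : ℝ} (hv : 0 ≤ v) (hv1 : v ≤ 1) (s s' : ZMod L → Bool) :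
    Vv v s s' ≤ 1 :=
  Finset.prod_le_one (fun i _ => by split <;> norm_num <;> exact hv)
    (fun i _ => by split <;> norm_num <;> exact hv1)

lemma Vv_self (v : ℝ) (s : ZMod L → Bool) : Vv v s s = 1 := by
  unfold Vv; simp

lemma Vv_ct_ct {v : ℝ} {b b' : Bool} (h : b' ≠ b) : Vv v (ct L b) (ct L b') = v ^ L := by
  unfold Vv ct
  rw [Finset.prod_congr rfl (fun i _ => if_neg (by simpa using h)), Finset.prod_const,
    Finset.card_univ, ZMod.card]

/-- The set of change points of a layer. -/
def changeSet (s : ZMod L → Bool) : Finset (ZMod L) :=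
  univ.filter (fun i => ¬ (s i = s (i-1)))

lemma om_eq_pow (u : ℝ) (s : ZMod L → Bool) : om u s = u ^ (changeSet s).card := by
  unfold om changeSet
  rw [Finset.prod_ite (fun _ => (1:ℝ)) (fun _ => u), Finset.prod_const_one,
    Finset.prod_const, one_mul]

lemma layer_det {s s' : ZMod L → Bool} (h0 : s 0 = s' 0)
    (hch : ∀ i : ZMod L, (s i = s (i-1)) ↔ (s' i = s' (i-1))) : s = s' := by
  have main : ∀ n : ℕ, s (n : ZMod L) = s' (n : ZMod L) := by
    intro n
    induction n with
    | zero => simpa using h0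
    | succ m ih =>
      have hc := hch (((m+1 : ℕ) : ZMod L))
      have hidx : ((m+1 : ℕ) : ZMod L) - 1 = ((m : ℕ) : ZMod L) := by push_cast; ring
      rw [hidx] at hc
      cases hs : s (((m+1:ℕ)) : ZMod L) <;> cases hs' : s' (((m+1:ℕ)) : ZMod L) <;>
        cases hm : s ((m : ℕ) : ZMod L) <;> simp_all
  funext i
  have hi : ((i.val : ℕ) : ZMod L) = i := ZMod.natCast_rightInverse i
  rw [← hi]
  exact main i.val

lemma const_of_changeSet_empty {s : ZMod L → Bool} (h : changeSet s = ∅) :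
    s = ct L (s 0) := by
  apply layer_det (by simp [ct])
  intro i
  have : ∀ j : ZMod L, s j = s (j-1) := by
    intro j
    by_contra hj
    have : j ∈ changeSet s := by simp [changeSet, hj]
    simp [h] at this
  simp [ct, this i]

lemma changeSet_nonempty {s : ZMod L → Bool}
    (hs : s ∈ (univ : Finset (ZMod L → Bool)) \ {ct L true, ct L false}) :
    (changeSet s).Nonempty := by
  rw [Finset.nonempty_iff_ne_empty]
  intro h
  have hc := const_of_changeSet_empty h
  rw [Finset.mem_sdiff, Finset.mem_insert, Finset.mem_singleton] at hs
  cases hb : s 0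
  · exact hs.2 (Or.inr (by rw [hc, hb]))
  · exact hs.2 (Or.inl (by rw [hc, hb]))

/-- total `om`-weight of nonconstant layers. -/
def rho (L : ℕ) [NeZero L] (u : ℝ) : ℝ :=
  ∑ s ∈ (univ : Finset (ZMod L → Bool)) \ {ct L true, ct L false}, om u s

lemma rho_nonneg {u : ℝ} (hu : 0 ≤ u) : 0 ≤ rho L u :=
  Finset.sum_nonneg fun s _ => om_nonneg hu s

lemma sum_pow_card (u : ℝ) :
    ∑ A : Finset (ZMod L), u ^ A.card = (1 + u) ^ L := by
  have h := Fintype.prod_add (fun _ : ZMod L => u) (fun _ : ZMod L => 1)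
  simp only [Finset.prod_const, Finset.prod_const_one, one_pow, mul_one] at h
  rw [Finset.card_univ, ZMod.card] at h
  rw [add_comm (1:ℝ) u, ← h]

lemma rho_le {u : ℝ} (hu : 0 ≤ u) : rho L u ≤ 2 * ((1 + u) ^ L - 1) := by
  classical
  set D := (univ : Finset (ZMod L → Bool)) \ {ct L true, ct L false} with hD
  have homeq : ∀ s ∈ D, om u s = u ^ (changeSet s).card := fun s _ => om_eq_pow u s
  rw [rho, Finset.sum_congr rfl homeq]
  -- reindex via the injective map s ↦ (s 0, changeSet s)
  have hinj : ∀ s1 ∈ D, ∀ s2 ∈ D,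
      (fun s => (s 0, changeSet s)) s1 = (fun s => (s 0, changeSet s)) s2 → s1 = s2 := by
    intro s1 _ s2 _ hp
    simp only [Prod.mk.injEq] at hp
    apply layer_det hp.1
    intro i
    have := hp.2
    rw [← not_iff_not]
    constructor
    · intro hne
      have h1 : i ∈ changeSet s1 := by simp [changeSet, hne]
      rw [this] at h1
      simp [changeSet] at h1
      exact h1
    · intro hne
      have h1 : i ∈ changeSet s2 := by simp [changeSet, hne]
      rw [← this] at h1
      simp [changeSet] at h1
      exact h1
  have himg := Finset.sum_image (s := D) (g := fun s => (s 0, changeSet s))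
    (f := fun p : Bool × Finset (ZMod L) => u ^ p.2.card) hinj
  rw [← himg]
  have hsub : D.image (fun s => (s 0, changeSet s))
      ⊆ (univ : Finset Bool) ×ˢ ((univ : Finset (Finset (ZMod L))).erase ∅) := by
    intro p hp
    rw [Finset.mem_image] at hp
    obtain ⟨s, hs, rfl⟩ := hp
    rw [Finset.mem_product]
    refine ⟨Finset.mem_univ _, ?_⟩
    rw [Finset.mem_erase]
    exact ⟨Finset.nonempty_iff_ne_empty.mp (changeSet_nonempty hs), Finset.mem_univ _⟩
  refine le_trans (Finset.sum_le_sum_of_subset_of_nonneg hsub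
    (fun p _ _ => pow_nonneg hu _)) ?_
  rw [Finset.sum_product]
  have h2 : ∀ b : Bool, ∑ A ∈ (univ : Finset (Finset (ZMod L))).erase ∅,
      u ^ A.card ≤ (1 + u) ^ L - 1 := by
    intro b
    have h3 := Finset.sum_erase_add (univ : Finset (Finset (ZMod L)))
      (fun A => u ^ A.card) (Finset.mem_univ ∅)
    rw [sum_pow_card] at h3
    simp only [Finset.card_empty, pow_zero] at h3
    linarith
  rw [Fintype.sum_bool]
  linarith [h2 true, h2 false]

end S0A
namespace S0A
open Finset

variable {L : ℕ} [NeZero L]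

/-- Path-sum recursion. -/
def AA (u v : ℝ) : ℕ → (ZMod L → Bool) → ℝ
  | 0, s => om u s
  | (n+1), s => om u s * ∑ s' : ZMod L → Bool, Vv v s s' * AA u v n s'

lemma AA_zero (u v : ℝ) (s : ZMod L → Bool) : AA u v 0 s = om u s := rfl

lemma AA_succ (u v : ℝ) (n : ℕ) (s : ZMod L → Bool) :
    AA u v (n+1) s = om u s * ∑ s' : ZMod L → Bool, Vv v s s' * AA u v n s' := rfl

lemma AA_nonneg {u v : ℝ} (hu : 0 ≤ u) (hv : 0 ≤ v) :
    ∀ n (s : ZMod L → Bool), 0 ≤ AA u v n s := by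
  intro n
  induction n with
  | zero => intro s; exact om_nonneg hu s
  | succ m ih =>
    intro s
    rw [AA_succ]
    exact mul_nonneg (om_nonneg hu s)
      (Finset.sum_nonneg fun s' _ => mul_nonneg (Vv_nonneg hv s s') (ih s'))

/-- Path weight. -/
def PW (u v : ℝ) (n : ℕ) (t : Fin (n+1) → ZMod L → Bool) : ℝ :=
  (∏ j, om u (t j)) * ∏ j : Fin n, Vv v (t j.castSucc) (t j.succ)

lemma PW_cons (u v : ℝ) (n : ℕ) (s : ZMod L → Bool) (w : Fin (n+1) → ZMod L → Bool) :
    PW u v (n+1) (Fin.cons s w) = om u s * Vv v s (w 0) * PW u v n w := by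
  unfold PW
  have hom : (∏ j : Fin (n+1+1), om (L := L) u (Fin.cons (α := fun _ => ZMod L → Bool) s w j))
      = om u s * ∏ j : Fin (n+1), om u (w j) := by
    rw [Fin.prod_univ_succ]
    simp only [Fin.cons_zero, Fin.cons_succ]
  have hV : (∏ j : Fin (n+1), Vv (L := L) v (Fin.cons (α := fun _ => ZMod L → Bool) s w j.castSucc) (Fin.cons (α := fun _ => ZMod L → Bool) s w j.succ))
      = Vv v s (w 0) * ∏ j : Fin n, Vv v (w j.castSucc) (w j.succ) := by
    rw [Fin.prod_univ_succ]
    simp only [Fin.cons_zero, Fin.cons_succ, Fin.castSucc_zero, ← Fin.succ_castSucc]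
  rw [hom, hV]
  ring

lemma AA_eq_sum (u v : ℝ) : ∀ (n : ℕ) (s : ZMod L → Bool),
    AA u v n s = ∑ w : Fin n → ZMod L → Bool, PW u v n (Fin.cons s w) := by
  intro n
  induction n with
  | zero =>
    intro s
    rw [Fintype.sum_unique]
    unfold PW
    rw [Fin.prod_univ_one]
    simp [Fin.cons_zero, AA_zero]
  | succ m ih =>
    intro s
    rw [AA_succ]
    have h1 : ∀ s' : ZMod L → Bool, Vv v s s' * AA u v m s'
        = ∑ w : Fin m → ZMod L → Bool, Vv v s s' * PW u v m (Fin.cons s' w) := by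
      intro s'
      rw [ih, Finset.mul_sum]
    simp_rw [h1]
    rw [Finset.mul_sum]
    simp_rw [Finset.mul_sum]
    have h2 : ∀ (s' : ZMod L → Bool) (w : Fin m → ZMod L → Bool),
        om u s * (Vv v s s' * PW u v m (Fin.cons s' w))
        = PW u v (m+1) (Fin.cons s (Fin.cons s' w)) := by
      intro s' w
      rw [PW_cons]
      simp only [Fin.cons_zero]
      ring
    simp_rw [h2]
    -- combine double sum into sum over functions on Fin (m+1)
    rw [← Fintype.sum_prod_type']
    exact Fintype.sum_equiv (Fin.consEquiv (fun _ : Fin (m+1) => ZMod L → Bool))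
      _ _ (fun p => rfl)

lemma sum_PW (u v : ℝ) (n : ℕ) :
    ∑ w : Fin (n+1) → ZMod L → Bool, PW u v n w = ∑ s : ZMod L → Bool, AA u v n s := by
  simp_rw [AA_eq_sum]
  rw [← Fintype.sum_prod_type']
  exact (Fintype.sum_equiv (Fin.consEquiv (fun _ : Fin (n+1) => ZMod L → Bool))
    _ _ (fun p => rfl)).symm

/-- endpoint masses -/
def aaQ (L : ℕ) [NeZero L] (u v : ℝ) (n : ℕ) : ℝ :=
  AA u v n (ct L true) + AA u v n (ct L false)

def bbQ (L : ℕ) [NeZero L] (u v : ℝ) (n : ℕ) : ℝ :=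
  ∑ s ∈ (univ : Finset (ZMod L → Bool)) \ {ct L true, ct L false}, AA u v n s

lemma sum_AA_split (u v : ℝ) (n : ℕ) :
    ∑ s : ZMod L → Bool, AA u v n s = aaQ L u v n + bbQ L u v n := by
  have h := split_pair (α := ZMod L → Bool) (AA (L := L) u v n) (ct_ne (L := L))
  rw [h]
  unfold aaQ bbQ
  ring

lemma aaQ_nonneg {u v : ℝ} (hu : 0 ≤ u) (hv : 0 ≤ v) (n : ℕ) : 0 ≤ aaQ L u v n := by
  unfold aaQ
  have := AA_nonneg (L := L) hu hv n
  linarith [this (ct L true), this (ct L false)]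

lemma bbQ_nonneg {u v : ℝ} (hu : 0 ≤ u) (hv : 0 ≤ v) (n : ℕ) : 0 ≤ bbQ L u v n :=
  Finset.sum_nonneg fun s _ => AA_nonneg hu hv n s

lemma aaQ_zero (u v : ℝ) : aaQ L u v 0 = 2 := by
  unfold aaQ
  rw [AA_zero, AA_zero, om_ct, om_ct]
  norm_num

lemma bbQ_zero (u v : ℝ) : bbQ L u v 0 = rho L u := by
  unfold bbQ rho
  exact Finset.sum_congr rfl fun s _ => AA_zero u v s

lemma aaQ_mono {u v : ℝ} (hu : 0 ≤ u) (hv : 0 ≤ v) (n : ℕ) :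
    aaQ L u v n ≤ aaQ L u v (n+1) := by
  unfold aaQ
  have key : ∀ b : Bool, AA u v n (ct L b) ≤ AA u v (n+1) (ct L b) := by
    intro b
    rw [AA_succ, om_ct, one_mul]
    have h1 : Vv v (ct L b) (ct L b) * AA u v n (ct L b) = AA u v n (ct L b) := by
      rw [Vv_self, one_mul]
    rw [← h1]
    exact Finset.single_le_sum (f := fun s' => Vv v (ct L b) s' * AA u v n s')
      (fun s' _ => mul_nonneg (Vv_nonneg hv _ _) (AA_nonneg hu hv n s'))
      (Finset.mem_univ (ct L b))
  linarith [key true, key false]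

lemma aaQ_rec {u v : ℝ} (hu : 0 ≤ u) (hv : 0 ≤ v) (hv1 : v ≤ 1) (n : ℕ) :
    aaQ L u v (n+1) ≤ (1 + v^L) * aaQ L u v n + 2 * bbQ L u v n := by
  have key : ∀ b b' : Bool, b' ≠ b →
      AA u v (n+1) (ct L b) ≤ AA u v n (ct L b) + v^L * AA u v n (ct L b')
        + bbQ L u v n := by
    intro b b' hbb
    rw [AA_succ, om_ct, one_mul]
    have hsplit := split_pair (fun s' => Vv v (ct L b) s' * AA u v n s') (ct_ne (L := L))
    rw [hsplit]
    have e1 : Vv v (ct L b) (ct L b) = 1 := Vv_self v _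
    have e2 : Vv v (ct L b) (ct L b') = v ^ L := Vv_ct_ct hbb
    have h3 : ∑ s' ∈ (univ : Finset (ZMod L → Bool)) \ {ct L true, ct L false},
        Vv v (ct L b) s' * AA u v n s' ≤ bbQ L u v n := by
      apply Finset.sum_le_sum
      intro s' _
      have := AA_nonneg (L := L) hu hv n s'
      have h4 := Vv_le_one hv hv1 (ct L b) s'
      nlinarith
    have hA := AA_nonneg (L := L) hu hv n
    cases b
    · -- b = false, b' must be true
      have hb' : b' = true := by
        cases b'
        · exact absurd rfl hbb
        · rfl
      subst hb'
      simp only [e1, e2, one_mul]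
      linarith [h3]
    · have hb' : b' = false := by
        cases b'
        · rfl
        · exact absurd rfl hbb
      subst hb'
      simp only [e1, e2, one_mul]
      linarith [h3]
  have k1 := key true false (by simp)
  have k2 := key false true (by simp)
  unfold aaQ
  unfold aaQ at k1 k2
  nlinarith [k1, k2]

lemma bbQ_rec {u v : ℝ} (hu : 0 ≤ u) (hv : 0 ≤ v) (hv1 : v ≤ 1) (n : ℕ) :
    bbQ L u v (n+1) ≤ rho L u * (aaQ L u v n + bbQ L u v n) := by
  have hb2 : bbQ L u v (n+1)
      = ∑ s ∈ (univ : Finset (ZMod L → Bool)) \ {ct L true, ct L false}, AA u v (n+1) s := rfl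
  rw [hb2]
  have h1 : ∀ s ∈ (univ : Finset (ZMod L → Bool)) \ {ct L true, ct L false},
      AA u v (n+1) s ≤ om u s * (∑ s' : ZMod L → Bool, AA u v n s') := by
    intro s _
    rw [AA_succ]
    apply mul_le_mul_of_nonneg_left _ (om_nonneg hu s)
    apply Finset.sum_le_sum
    intro s' _
    have h2 := AA_nonneg (L := L) hu hv n s'
    have h3 := Vv_le_one hv hv1 s s'
    nlinarith
  refine le_trans (Finset.sum_le_sum h1) ?_
  rw [← Finset.sum_mul, sum_AA_split]
  have hre : ∑ s ∈ (univ : Finset (ZMod L → Bool)) \ {ct L true, ct L false}, om u s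
      = rho L u := rfl
  rw [hre]

lemma bbQ_le {u v : ℝ} (hu : 0 ≤ u) (hv : 0 ≤ v) (hv1 : v ≤ 1) (hρ : rho L u ≤ 1/2) :
    ∀ n, bbQ L u v n ≤ 2 * rho L u * aaQ L u v n := by
  intro n
  induction n with
  | zero =>
    rw [aaQ_zero, bbQ_zero]
    have := rho_nonneg (L := L) hu
    linarith
  | succ m ih =>
    have h1 := bbQ_rec (L := L) hu hv hv1 m
    have h2 := aaQ_mono (L := L) hu hv m
    have h3 := aaQ_nonneg (L := L) hu hv m
    have h4 := rho_nonneg (L := L) hu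
    have P1 : rho L u * bbQ L u v m ≤ rho L u * (2 * rho L u * aaQ L u v m) :=
      mul_le_mul_of_nonneg_left ih h4
    have P2 : 2 * rho L u * aaQ L u v m ≤ 2 * rho L u * aaQ L u v (m+1) :=
      mul_le_mul_of_nonneg_left h2 (by linarith)
    have P3 : rho L u * (rho L u * aaQ L u v m) ≤ (1/2) * (rho L u * aaQ L u v m) :=
      mul_le_mul_of_nonneg_right hρ (mul_nonneg h4 h3)
    nlinarith [P1, P2, P3, mul_nonneg h4 h3]

lemma aaQ_le {u v : ℝ} (hu : 0 ≤ u) (hv : 0 ≤ v) (hv1 : v ≤ 1) (hρ : rho L u ≤ 1/2) :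
    ∀ n, aaQ L u v n ≤ 2 * (1 + (v^L + 4 * rho L u))^n := by
  intro n
  induction n with
  | zero => rw [aaQ_zero]; norm_num
  | succ m ih =>
    have h1 := aaQ_rec (L := L) hu hv hv1 m
    have h2 := bbQ_le (L := L) hu hv hv1 hρ m
    have h3 := aaQ_nonneg (L := L) hu hv m
    have h4 := rho_nonneg (L := L) hu
    have h5 : 0 ≤ v ^ L := pow_nonneg hv L
    have hstep : aaQ L u v (m+1) ≤ (1 + (v^L + 4 * rho L u)) * aaQ L u v m := by
      nlinarith
    calc aaQ L u v (m+1) ≤ (1 + (v^L + 4 * rho L u)) * aaQ L u v m := hstep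
      _ ≤ (1 + (v^L + 4 * rho L u)) * (2 * (1 + (v^L + 4 * rho L u))^m) := by
          apply mul_le_mul_of_nonneg_left ih
          nlinarith
      _ = 2 * (1 + (v^L + 4 * rho L u))^(m+1) := by ring

end S0A
namespace S0A
open Finset

variable {L : ℕ} [NeZero L]

set_option maxHeartbeats 1000000

def zf (n : ℕ) : Fin (n+1) ≃ ZMod (n+1) where
  toFun j := ((j : ℕ) : ZMod (n+1))
  invFun m := ⟨m.val, m.val_lt⟩
  left_inv j := by
    apply Fin.ext
    simp [ZMod.val_natCast, Nat.mod_eq_of_lt j.isLt]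
  right_inv m := ZMod.natCast_rightInverse m

lemma zf_succ_sub_one (n : ℕ) (j : Fin n) : zf n j.succ - 1 = zf n j.castSucc := by
  show ((j.succ : ℕ) : ZMod (n+1)) - 1 = ((j.castSucc : ℕ) : ZMod (n+1))
  rw [Fin.val_succ, Fin.coe_castSucc]
  push_cast
  ring

/-- Cyclic (torus) weight of a full layer configuration. -/
def CW (u v : ℝ) (t : ZMod L → ZMod L → Bool) : ℝ :=
  ∏ m : ZMod L, (om u (t m) * Vv v (t (m-1)) (t m))

lemma CW_const (u v : ℝ) (b : Bool) : CW u v (fun _ => ct L b) = 1 := by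
  unfold CW
  simp [om_ct, Vv_self]

lemma CW_le_PW {u v : ℝ} (hu : 0 ≤ u) (hv : 0 ≤ v) (hv1 : v ≤ 1) (n : ℕ)
    (t : ZMod (n+1) → ZMod (n+1) → Bool) :
    CW u v t ≤ PW u v n (fun j => t (zf n j)) := by
  unfold CW PW
  beta_reduce
  rw [Finset.prod_mul_distrib]
  have h1 : ∏ m : ZMod (n+1), om u (t m) = ∏ j : Fin (n+1), om u (t (zf n j)) :=
    (Fintype.prod_equiv (zf n) (fun j => om u (t (zf n j))) (fun m => om u (t m))
      (fun j => rfl)).symm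
  have h2 : ∏ m : ZMod (n+1), Vv v (t (m-1)) (t m)
      = ∏ j : Fin (n+1), Vv v (t (zf n j - 1)) (t (zf n j)) :=
    (Fintype.prod_equiv (zf n) (fun j => Vv v (t (zf n j - 1)) (t (zf n j)))
      (fun m => Vv v (t (m-1)) (t m)) (fun j => rfl)).symm
  have h3 : ∀ j : Fin n, Vv v (t (zf n j.succ - 1)) (t (zf n j.succ))
      = Vv v (t (zf n j.castSucc)) (t (zf n j.succ)) := fun j => by rw [zf_succ_sub_one]
  have h4 : ∏ j : Fin (n+1), Vv v (t (zf n j - 1)) (t (zf n j))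
      = Vv v (t (zf n 0 - 1)) (t (zf n 0))
        * ∏ j : Fin n, Vv v (t (zf n j.succ - 1)) (t (zf n j.succ)) :=
    Fin.prod_univ_succ _
  rw [h1, h2, h4, Finset.prod_congr rfl (fun j _ => h3 j)]
  have hP : 0 ≤ ∏ j : Fin n, Vv v (t (zf n j.castSucc)) (t (zf n j.succ)) :=
    Finset.prod_nonneg fun j _ => Vv_nonneg hv _ _
  have hO : 0 ≤ ∏ j : Fin (n+1), om u (t (zf n j)) :=
    Finset.prod_nonneg fun j _ => om_nonneg hu _
  have hV0 : Vv v (t (zf n 0 - 1)) (t (zf n 0)) ≤ 1 := Vv_le_one hv hv1 _ _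
  rw [mul_left_comm]
  exact mul_le_of_le_one_left (mul_nonneg hO hP) hV0

lemma exp_le_one_add {y : ℝ} (h0 : 0 ≤ y) (h1 : y ≤ 1) : exp y ≤ 1 + 2*y := by
  have hb := Real.exp_bound (x := y) (by rwa [abs_of_nonneg h0]) (n := 1) one_pos
  norm_num at hb
  rw [abs_of_nonneg h0] at hb
  have h2 := (abs_le.mp hb).2
  linarith

theorem core {u v : ℝ} (hu : 0 ≤ u) (hv : 0 ≤ v) (hv1 : v ≤ 1)
    (hρ : rho L u ≤ 1/2) (hx : (v^L + 4 * rho L u) * L ≤ 1) :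
    ∑ t : ZMod L → ZMod L → Bool, CW u v t
      ≤ 2 + 4*(L:ℝ)*v^L + 28*(L:ℝ)*rho L u := by
  obtain ⟨n, rfl⟩ : ∃ n, L = n + 1 :=
    ⟨L - 1, (Nat.succ_pred_eq_of_pos (Nat.pos_of_ne_zero (NeZero.ne L))).symm⟩
  have step1 : ∑ t : ZMod (n+1) → ZMod (n+1) → Bool, CW u v t
      ≤ ∑ w : Fin (n+1) → ZMod (n+1) → Bool, PW u v n w := by
    calc ∑ t : ZMod (n+1) → ZMod (n+1) → Bool, CW u v t
        ≤ ∑ t : ZMod (n+1) → ZMod (n+1) → Bool, PW u v n (fun j => t (zf n j)) :=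
          Finset.sum_le_sum (fun t _ => CW_le_PW hu hv hv1 n t)
      _ = ∑ w : Fin (n+1) → ZMod (n+1) → Bool, PW u v n w := by
          apply Fintype.sum_equiv
            (Equiv.arrowCongr ((zf n).symm) (Equiv.refl (ZMod (n+1) → Bool)))
          intro t
          congr 1
  rw [sum_PW, sum_AA_split] at step1
  set ρ := rho (n+1) u with hρdef
  set x := v^(n+1) + 4*ρ with hxdef
  have hρ0 : 0 ≤ ρ := rho_nonneg hu
  have hvL0 : (0:ℝ) ≤ v^(n+1) := pow_nonneg hv _
  have hx0 : 0 ≤ x := by rw [hxdef]; linarith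
  have hN : ((n+1 : ℕ) : ℝ) = (n : ℝ) + 1 := by push_cast; ring
  have hxN : x * ((n:ℝ)+1) ≤ 1 := by rw [← hN]; exact hx
  have hxn : x * (n:ℝ) ≤ 1 := by nlinarith [Nat.cast_nonneg (α := ℝ) n]
  have hxn0 : 0 ≤ x * (n:ℝ) := mul_nonneg hx0 (Nat.cast_nonneg n)
  -- bound P := (1+x)^n
  set P := (1 + x)^n with hPdef
  have hP1 : P ≤ exp (x * (n:ℝ)) := by
    have h1 : 1 + x ≤ exp x := by linarith [Real.add_one_le_exp x]
    have h2 : P ≤ (exp x)^n := pow_le_pow_left₀ (by linarith) h1 n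
    have h3 : (exp x)^n = exp ((n:ℝ) * x) := (Real.exp_nat_mul x n).symm
    rw [h3, mul_comm] at h2
    exact h2
  have hP2 : P ≤ 1 + 2*(x*(n:ℝ)) := le_trans hP1 (exp_le_one_add hxn0 hxn)
  have hP3 : P ≤ 3 := by linarith
  have hP0 : 0 ≤ P := pow_nonneg (by linarith) n
  -- aaQ and bbQ bounds
  have haa := aaQ_le (L := n+1) hu hv hv1 hρ n
  have hbb := bbQ_le (L := n+1) hu hv hv1 hρ n
  have haa0 := aaQ_nonneg (L := n+1) hu hv n
  rw [← hρdef, ← hxdef, ← hPdef] at haa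
  have key : aaQ (n+1) u v n + bbQ (n+1) u v n ≤ 2*P + 4*ρ*P := by
    have h1 : bbQ (n+1) u v n ≤ 2*ρ*aaQ (n+1) u v n := by rw [hρdef]; exact hbb
    have h2 : (1+2*ρ) * aaQ (n+1) u v n ≤ (1+2*ρ) * (2*P) :=
      mul_le_mul_of_nonneg_left haa (by linarith)
    nlinarith
  -- final numeric assembly
  have hn1 : (1:ℝ) ≤ (n:ℝ)+1 := by linarith [Nat.cast_nonneg (α := ℝ) n]
  have t1 : x * (n:ℝ) ≤ x * ((n:ℝ)+1) := by nlinarith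
  have t2 : 4*ρ*P ≤ 12*ρ := by nlinarith
  have t3 : 12*ρ ≤ 12*(((n:ℝ)+1)*ρ) := by nlinarith
  have goal2 : 2*P + 4*ρ*P ≤ 2 + 4*((n:ℝ)+1)*v^(n+1) + 28*((n:ℝ)+1)*ρ := by
    have e1 : x * ((n:ℝ)+1) = ((n:ℝ)+1)*v^(n+1) + 4*(((n:ℝ)+1)*ρ) := by
      rw [hxdef]; ring
    nlinarith [t1, t2, t3, hP2, e1, mul_nonneg (mul_nonneg hρ0 hP0) (le_of_lt one_pos)]
  rw [hN]
  calc ∑ t : ZMod (n+1) → ZMod (n+1) → Bool, CW u v t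
      ≤ aaQ (n+1) u v n + bbQ (n+1) u v n := step1
    _ ≤ 2*P + 4*ρ*P := key
    _ ≤ 2 + 4*((n:ℝ)+1)*v^(n+1) + 28*((n:ℝ)+1)*ρ := goal2

end S0A
namespace S0A
open Finset

variable {L : ℕ} [NeZero L]

set_option maxHeartbeats 1000000

def pE (L : ℕ) [NeZero L] : (ZMod L × ZMod L) ≃ Site L where
  toFun p := (p.2, p.1 - p.2)
  invFun y := (y.1 + y.2, y.1)
  left_inv p := by
    obtain ⟨m, i⟩ := p
    show (i + (m - i), i) = (m, i)
    rw [show i + (m - i) = m by ring]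
  right_inv y := by
    obtain ⟨i, j⟩ := y
    show (i, i + j - i) = (i, j)
    rw [show i + j - i = j by ring]

def tlE (L : ℕ) [NeZero L] : Cfg L ≃ (ZMod L → ZMod L → Bool) where
  toFun σ := fun m i => σ (i, m - i)
  invFun t := fun y => t (y.1 + y.2) y.1
  left_inv σ := by
    funext y
    obtain ⟨i, j⟩ := y
    show σ (i, i + j - i) = σ (i, j)
    rw [show i + j - i = j by ring]
  right_inv t := by
    funext m i
    show t (i + (m - i)) i = t m i
    rw [show i + (m - i) = m by ring]

lemma Wb_eq (J q : ℝ) (σ : Cfg L) : Wb J q σ = CW (ub J) (vb J q) (tlE L σ) := by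
  unfold Wb hwt CW
  rw [Finset.prod_mul_distrib, Finset.prod_mul_distrib]
  congr 1
  · -- horizontal factors
    rw [← Fintype.prod_equiv (pE L)
      (fun p => if σ (dnN (pE L p)) = σ (lfN (pE L p)) then (1:ℝ) else ub J)
      (fun y => if σ (dnN y) = σ (lfN y) then (1:ℝ) else ub J) (fun p => rfl),
      Fintype.prod_prod_type]
    have hinner : ∀ m : ZMod L,
        (∏ i : ZMod L, (if σ (dnN (pE L (m, i))) = σ (lfN (pE L (m, i))) then (1:ℝ) else ub J))
        = om (ub J) (tlE L σ (m-1)) := by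
      intro m
      unfold om
      apply Finset.prod_congr rfl
      intro i _
      have a1 : dnN (pE L (m, i)) = (i, m - 1 - i) := by
        show ((i, m - i - 1) : Site L) = (i, m - 1 - i)
        rw [sub_right_comm]
      have a2 : lfN (pE L (m, i)) = (i - 1, m - 1 - (i - 1)) := by
        show ((i - 1, m - i) : Site L) = (i - 1, m - 1 - (i - 1))
        congr 1
        ring
      rw [a1, a2]
      rfl
    rw [Finset.prod_congr rfl (fun m _ => hinner m)]
    exact Fintype.prod_equiv (Equiv.subRight (1 : ZMod L))
      (fun m => om (ub J) (tlE L σ (m - 1))) (fun m => om (ub J) (tlE L σ m))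
      (fun m => rfl)
  · -- vertical factors
    rw [← Fintype.prod_equiv (pE L)
      (fun p => if σ (pE L p) = σ (dnN (pE L p)) then (1:ℝ) else vb J q)
      (fun y => if σ y = σ (dnN y) then (1:ℝ) else vb J q) (fun p => rfl),
      Fintype.prod_prod_type]
    apply Finset.prod_congr rfl
    intro m _
    unfold Vv
    apply Finset.prod_congr rfl
    intro i _
    have a1 : dnN (pE L (m, i)) = (i, m - 1 - i) := by
      show ((i, m - i - 1) : Site L) = (i, m - 1 - i)
      rw [sub_right_comm]
    rw [a1]
    rfl

lemma Wb_const (J q : ℝ) (b : Bool) : Wb J q (fun _ : Site L => b) = 1 := by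
  unfold Wb hwt
  simp

/-- Bound for the nonconstant part of the `Wb`-mass. -/
lemma sum_nonconst_Wb (J q : ℝ) (hv0 : 0 ≤ vb J q) (hv1 : vb J q ≤ 1)
    (hρ : rho L (ub J) ≤ 1/2)
    (hx : ((vb J q)^L + 4 * rho L (ub J)) * L ≤ 1) :
    ∑ σ ∈ univ \ {plusCfg L, minusCfg L}, Wb J q σ
      ≤ 4*(L:ℝ)*(vb J q)^L + 28*(L:ℝ)*rho L (ub J) := by
  have htot : ∑ σ : Cfg L, Wb J q σ = ∑ t : ZMod L → ZMod L → Bool, CW (ub J) (vb J q) t :=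
    Fintype.sum_equiv (tlE L) _ _ (fun σ => Wb_eq J q σ)
  have hsplit := split_pair (α := Cfg L) (Wb J q) (plus_ne_minus (L := L))
  have hplus : Wb J q (plusCfg L) = 1 := Wb_const J q true
  have hminus : Wb J q (minusCfg L) = 1 := Wb_const J q false
  have hcore := core (L := L) (ub_pos J).le hv0 hv1 hρ hx
  rw [htot] at hsplit
  rw [hplus, hminus] at hsplit
  linarith

lemma tv_le_one (J q : ℝ) : tv L (piPCA L J q) (piG L J) ≤ 1 := by
  have hSP2 : (2:ℝ) ≤ ∑ σ' : Cfg L, Wp J q σ' := sum_Wp_ge_two J q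
  have hSG2 : (2:ℝ) ≤ ∑ σ' : Cfg L, Wg J σ' := sum_Wg_ge_two J
  have hSP : (0:ℝ) < ∑ σ' : Cfg L, Wp J q σ' := by linarith
  have hSG : (0:ℝ) < ∑ σ' : Cfg L, Wg J σ' := by linarith
  have h1 : ∀ σ : Cfg L, |piPCA L J q σ - piG L J σ| ≤ piPCA L J q σ + piG L J σ := by
    intro σ
    have hp : 0 ≤ piPCA L J q σ := by
      rw [piPCA_eq]
      exact div_nonneg (Wp_nonneg J q σ) hSP.le
    have hg : 0 ≤ piG L J σ := by
      rw [piG_eq]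
      exact div_nonneg (Wg_nonneg J σ) hSG.le
    rw [abs_sub_le_iff]
    constructor <;> linarith
  have h2 : ∑ σ : Cfg L, piPCA L J q σ = 1 := by
    simp_rw [piPCA_eq]
    rw [← Finset.sum_div, div_self hSP.ne']
  have h3 : ∑ σ : Cfg L, piG L J σ = 1 := by
    simp_rw [piG_eq]
    rw [← Finset.sum_div, div_self hSG.ne']
  unfold tv
  have h4 : ∑ σ : Cfg L, |piPCA L J q σ - piG L J σ|
      ≤ ∑ σ : Cfg L, (piPCA L J q σ + piG L J σ) := Finset.sum_le_sum fun σ _ => h1 σ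
  rw [Finset.sum_add_distrib, h2, h3] at h4
  linarith

end S0A
namespace S0A
open Finset Filter

set_option maxHeartbeats 1000000

lemma rpow_exp_eq {x : ℝ} (hx : 0 < x) (y : ℝ) : x ^ y = exp (y * Real.log x) := by
  rw [Real.rpow_def_of_pos hx, mul_comm]

lemma rpow_mul_self {x : ℝ} (hx : 0 < x) (a : ℝ) : x ^ a * x = x ^ (a+1) := by
  calc x^a * x = x^a * x^(1:ℝ) := by rw [Real.rpow_one]
    _ = x^(a+1) := by rw [← Real.rpow_add hx]

lemma final_est (k c : ℝ) (hk : 1 < k) (hc : 2 < c) (L : ℕ) [NeZero L] (h2 : 2 ≤ L)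
    (hE1 : c * Real.log L / L ≤ 1/3)
    (hE2 : 1/c ≤ Real.log L)
    (hE3 : 4 * (L:ℝ)^(1-2*k) ≤ 1)
    (hE4 : 16 * (L:ℝ)^(1-2*k) ≤ 1/2)
    (hE5 : 2 * (L:ℝ)^(1-4*k) ≤ 1)
    (hE6 : 3 * (L:ℝ)^(1-2*c) ≤ 1/2)
    (hE7 : 64 * (L:ℝ)^(2-2*k) ≤ 1/2) :
    tv L (piPCA L (k * Real.log L) (c * Real.log L / L)) (piG L (k * Real.log L))
      ≤ 460 * ((L:ℝ) ^ (-(c/2-1)) + (L:ℝ) ^ (-(2*k-2))) := by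
  set J := k * Real.log L with hJdef
  set q := c * Real.log L / L with hqdef
  have hEL0 : (0:ℝ) < L := by exact_mod_cast (by omega : 0 < L)
  have hEL1 : (1:ℝ) ≤ L := by exact_mod_cast (by omega : 1 ≤ L)
  have hEL1' : (1:ℝ) < L := by exact_mod_cast (by omega : 1 < L)
  have hlL0 : 0 < Real.log L := Real.log_pos hEL1'
  have hJ0 : 0 ≤ J := mul_nonneg (by linarith) hlL0.le
  have hq0 : 0 ≤ q := div_nonneg (mul_nonneg (by linarith) hlL0.le) hEL0.le
  have hq13 : q ≤ 1/3 := hE1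
  -- exp/rpow conversions
  have e2J : exp (-(2*J)) = (L:ℝ) ^ (-(2*k)) := by
    rw [rpow_exp_eq hEL0]
    congr 1
    rw [hJdef]; ring
  have e4J : exp (-(4*J)) = (L:ℝ) ^ (-(4*k)) := by
    rw [rpow_exp_eq hEL0]
    congr 1
    rw [hJdef]; ring
  have eqL : q * L = c * Real.log L := by rw [hqdef]; field_simp
  have hlog2 := Real.log_two_gt_d9
  -- vb bounds
  have hvb2 : 1/2 ≤ vb J q := by
    have h : exp (-(Real.log 2)) ≤ exp (-(2*q)) := Real.exp_le_exp.mpr (by linarith)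
    rw [Real.exp_neg, Real.exp_log two_pos] at h
    have h2' := (Real.exp_pos (-(4*J))).le
    unfold vb
    have : ((2:ℝ))⁻¹ = 1/2 := by norm_num
    rw [this] at h
    linarith
  have hvb1 : vb J q ≤ 1 := by
    have h1 : exp (-(2*q)) ≤ 1 - q := by
      have hexpq := Real.add_one_le_exp (2*q)
      have h1q : (0:ℝ) ≤ 1 - q := by linarith
      have hmul : (1-q)*(2*q+1) ≤ (1-q)*exp (2*q) := mul_le_mul_of_nonneg_left hexpq h1q
      have hge1 : 1 ≤ (1-q)*exp (2*q) := by nlinarith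
      rw [Real.exp_neg, inv_eq_one_div, div_le_iff₀ (Real.exp_pos _)]
      nlinarith [Real.exp_pos (2*q)]
    have hqL : 1/(L:ℝ) ≤ q := by
      rw [hqdef]
      have hc1 : 1 ≤ c * Real.log L := by
        have := mul_le_mul_of_nonneg_left hE2 (by linarith : (0:ℝ) ≤ c)
        have hcc : c * (1/c) = 1 := by field_simp
        linarith [hcc ▸ this]
      gcongr
    have h2' : exp (-(4*J)) ≤ q := by
      rw [e4J]
      calc (L:ℝ)^(-(4*k)) ≤ (L:ℝ)^(-(1:ℝ)) :=
            Real.rpow_le_rpow_of_exponent_le hEL1 (by linarith)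
        _ = 1/(L:ℝ) := by
            rw [Real.rpow_neg hEL0.le, Real.rpow_one, inv_eq_one_div]
        _ ≤ q := hqL
    unfold vb
    linarith
  have hvb0 : 0 ≤ vb J q := (vb_pos J q).le
  -- rho bound
  have huL : ub J * L = 4*(L:ℝ)^(1-2*k) := by
    unfold ub
    rw [e2J, mul_assoc, rpow_mul_self hEL0]
    congr 2
    ring
  have hu0 : (0:ℝ) ≤ ub J := (ub_pos J).le
  have huL1 : ub J * L ≤ 1 := by rw [huL]; exact hE3
  have hrho4 : rho L (ub J) ≤ 16*(L:ℝ)^(1-2*k) := by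
    have h1 := rho_le (L := L) hu0
    have h2 : (1 + ub J)^L ≤ exp (ub J * L) := by
      have ha : 1 + ub J ≤ exp (ub J) := by linarith [Real.add_one_le_exp (ub J)]
      have hb : (1 + ub J)^L ≤ (exp (ub J))^L := pow_le_pow_left₀ (by linarith) ha L
      rw [← Real.exp_nat_mul, mul_comm] at hb
      exact hb
    have h3 : exp (ub J * L) ≤ 1 + 2*(ub J * L) :=
      exp_le_one_add (mul_nonneg hu0 hEL0.le) huL1
    have h4 : rho L (ub J) ≤ 4 * (ub J * L) := by linarith
    rw [huL] at h4
    linarith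
  have hρh : rho L (ub J) ≤ 1/2 := by linarith [hE4]
  have hrho0 : 0 ≤ rho L (ub J) := rho_nonneg hu0
  -- vb^L bound
  have hvbL : (vb J q)^L ≤ 3*(L:ℝ)^(-(2*c)) := by
    set z := exp (2*q) * exp (-(4*J)) with hzdef
    have hz0 : (0:ℝ) ≤ z := by positivity
    have h1 : exp (-(2*q)) * (1 + z) = vb J q := by
      unfold vb
      rw [hzdef, mul_add, mul_one, ← mul_assoc, ← Real.exp_add,
        show -(2*q)+2*q = 0 by ring, Real.exp_zero, one_mul]
    have hvb_le : vb J q ≤ exp (-(2*q) + z) := by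
      have h2' : 1 + z ≤ exp z := by linarith [Real.add_one_le_exp z]
      calc vb J q = exp (-(2*q)) * (1+z) := h1.symm
        _ ≤ exp (-(2*q)) * exp z :=
            mul_le_mul_of_nonneg_left h2' (Real.exp_pos _).le
        _ = exp (-(2*q) + z) := (Real.exp_add _ _).symm
    have hpow : (vb J q)^L ≤ exp ((-(2*q) + z) * L) := by
      have hp := pow_le_pow_left₀ hvb0 hvb_le L
      rw [← Real.exp_nat_mul, mul_comm ((L:ℝ)) _] at hp
      exact hp
    have hzL : z * L ≤ 1 := by
      have hq2 : exp (2*q) ≤ 2 := by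
        have hh : exp (2*q) ≤ exp (Real.log 2) := Real.exp_le_exp.mpr (by linarith)
        rwa [Real.exp_log two_pos] at hh
      have hz2 : z ≤ 2 * (L:ℝ)^(-(4*k)) := by
        rw [hzdef, e4J]
        have hr0 : (0:ℝ) ≤ (L:ℝ)^(-(4*k)) := Real.rpow_nonneg hEL0.le _
        nlinarith
      have h5 : z * L ≤ 2*(L:ℝ)^(-(4*k)) * L := mul_le_mul_of_nonneg_right hz2 hEL0.le
      have heq : 2*(L:ℝ)^(-(4*k)) * L = 2*(L:ℝ)^(1-4*k) := by
        rw [mul_assoc, rpow_mul_self hEL0]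
        congr 2
        ring
      rw [heq] at h5
      linarith [hE5]
    have hqLL : exp ((-(2*q)) * L) = (L:ℝ)^(-(2*c)) := by
      rw [rpow_exp_eq hEL0]
      congr 1
      linear_combination (-2 : ℝ) * eqL
    have h4 : exp ((-(2*q) + z)*L) = exp ((-(2*q))*L) * exp (z*L) := by
      rw [← Real.exp_add]
      congr 1
      ring
    have h5 : exp (z*(L:ℝ)) ≤ 3 := by
      have h6 : exp (z*(L:ℝ)) ≤ exp 1 := Real.exp_le_exp.mpr hzL
      have he1 : exp (1:ℝ) < 3 := by
        have := Real.exp_one_lt_d9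
        linarith
      linarith
    rw [h4, hqLL] at hpow
    have hrp : (0:ℝ) ≤ (L:ℝ)^(-(2*c)) := Real.rpow_nonneg hEL0.le _
    nlinarith [hpow, h5, hrp, (Real.exp_pos (z*(L:ℝ))).le]
  -- xL ≤ 1
  have t1 : (vb J q)^L * L ≤ 3*(L:ℝ)^(1-2*c) := by
    have h := mul_le_mul_of_nonneg_right hvbL hEL0.le
    have heq : 3*(L:ℝ)^(-(2*c)) * L = 3*(L:ℝ)^(1-2*c) := by
      rw [mul_assoc, rpow_mul_self hEL0]
      congr 2
      ring
    linarith [heq ▸ h]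
  have t2 : rho L (ub J) * L ≤ 16*(L:ℝ)^(2-2*k) := by
    have h := mul_le_mul_of_nonneg_right hrho4 hEL0.le
    have heq : 16*(L:ℝ)^(1-2*k) * L = 16*(L:ℝ)^(2-2*k) := by
      rw [mul_assoc, rpow_mul_self hEL0]
      congr 2
      ring
    linarith [heq ▸ h]
  have hxcond : ((vb J q)^L + 4 * rho L (ub J)) * L ≤ 1 := by
    have expand : ((vb J q)^L + 4 * rho L (ub J)) * L
        = (vb J q)^L * L + 4 * (rho L (ub J) * L) := by ring
    rw [expand]
    linarith [hE6, hE7, t1, t2]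
  -- main chain
  have hmain := le_trans (tv_le_main J q hJ0 hq0 hvb2 hvb1)
    (sum_nonconst_Wb J q hvb0 hvb1 hρh hxcond)
  -- final numeric comparison
  have f1 : 4*(L:ℝ)*(vb J q)^L ≤ 12*(L:ℝ)^(1-2*c) := by nlinarith [t1]
  have f2 : 28*(L:ℝ)*rho L (ub J) ≤ 448*(L:ℝ)^(2-2*k) := by nlinarith [t2]
  have g1 : (L:ℝ)^(1-2*c) ≤ (L:ℝ)^(-(c/2-1)) :=
    Real.rpow_le_rpow_of_exponent_le hEL1 (by linarith)
  have g2 : (L:ℝ)^(2-2*k) = (L:ℝ)^(-(2*k-2)) := by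
    congr 1
    ring
  have g3 : (0:ℝ) ≤ (L:ℝ)^(-(c/2-1)) := Real.rpow_nonneg hEL0.le _
  have g4 : (0:ℝ) ≤ (L:ℝ)^(2-2*k) := Real.rpow_nonneg hEL0.le _
  rw [← g2]
  linarith

end S0A
namespace S0A
open Filter

set_option maxHeartbeats 1000000

lemma ev_rpow (a ε e : ℝ) (he : e < 0) (hε : 0 < ε) :
    ∀ᶠ L : ℕ in atTop, a * (L:ℝ)^e ≤ ε := by
  have h1 : Tendsto (fun x : ℝ => x ^ e) atTop (nhds 0) := by
    have := tendsto_rpow_neg_atTop (y := -e) (by linarith)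
    simpa [neg_neg] using this
  have h2 : Tendsto (fun L : ℕ => a * (L:ℝ)^e) atTop (nhds (a*0)) :=
    ((h1.comp tendsto_natCast_atTop_atTop).const_mul a)
  rw [mul_zero] at h2
  exact h2.eventually_le_const hε

lemma log_le_two_sqrt {x : ℝ} (hx : 1 ≤ x) : Real.log x ≤ 2 * x^(1/2 : ℝ) := by
  have h0 : (0:ℝ) < x := by linarith
  have h1 : Real.log x = 2 * Real.log (x ^ (1/2:ℝ)) := by
    rw [Real.log_rpow h0]
    ring
  have h2 : Real.log (x^(1/2:ℝ)) ≤ x^(1/2:ℝ) - 1 :=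
    Real.log_le_sub_one_of_pos (Real.rpow_pos_of_pos h0 _)
  linarith

lemma ev_q_small (c : ℝ) (hc : 0 < c) :
    ∀ᶠ L : ℕ in atTop, c * Real.log L / L ≤ 1/3 := by
  have base := ev_rpow (2*c) (1/3) (-(1/2)) (by norm_num) (by norm_num)
  filter_upwards [base, eventually_ge_atTop 1] with L hb hL1
  have hL1' : (1:ℝ) ≤ (L:ℝ) := by exact_mod_cast hL1
  have hL0 : (0:ℝ) < (L:ℝ) := by linarith
  have hlog := log_le_two_sqrt hL1'
  have h2 : (L:ℝ)^(1/2:ℝ) / L = (L:ℝ)^(-(1/2):ℝ) := by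
    rw [div_eq_iff hL0.ne', rpow_mul_self hL0]
    congr 1
    norm_num
  have key : c * Real.log L / L ≤ 2*c*(L:ℝ)^(-(1/2):ℝ) := by
    calc c * Real.log L / L ≤ c*(2*(L:ℝ)^(1/2:ℝ))/L := by
          gcongr
      _ = 2*c*((L:ℝ)^(1/2:ℝ)/L) := by ring
      _ = 2*c*(L:ℝ)^(-(1/2):ℝ) := by rw [h2]
  linarith

lemma ev_log_ge (a : ℝ) : ∀ᶠ L : ℕ in atTop, a ≤ Real.log L :=
  (Real.tendsto_log_atTop.comp tendsto_natCast_atTop_atTop).eventually_ge_atTop a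

end S0A

/-- In the low temperature regime `J = k log L`, `q = c (log L)/L`
(for any fixed `k, c > 0`), there are `C > 0` and `L₀` such that for all `L ≥ L₀`,
`‖π_PCA − π_G‖_TV ≤ C (L^{-(c/2−1)} + L^{-(2k−2)})`. -/
theorem stmt0 (k c : ℝ) (hk : 0 < k) (hc : 0 < c) :
    ∃ C > (0:ℝ), ∃ L₀ : ℕ, ∀ L : ℕ, L₀ ≤ L → ∀ (h2 : 2 ≤ L),
      haveI : NeZero L := ⟨by omega⟩
      tv L (piPCA L (k * Real.log L) (c * Real.log L / L)) (piG L (k * Real.log L))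
        ≤ C * ((L : ℝ) ^ (-(c / 2 - 1)) + (L : ℝ) ^ (-(2 * k - 2))) := by
  by_cases hkc : 1 < k ∧ 2 < c
  · obtain ⟨hk1, hc2⟩ := hkc
    have ev1 := S0A.ev_q_small c hc
    have ev2 := S0A.ev_log_ge (1/c)
    have ev3 := S0A.ev_rpow 4 1 (1-2*k) (by linarith) one_pos
    have ev4 := S0A.ev_rpow 16 (1/2) (1-2*k) (by linarith) (by norm_num)
    have ev5 := S0A.ev_rpow 2 1 (1-4*k) (by linarith) one_pos
    have ev6 := S0A.ev_rpow 3 (1/2) (1-2*c) (by linarith) (by norm_num)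
    have ev7 := S0A.ev_rpow 64 (1/2) (2-2*k) (by linarith) (by norm_num)
    have evAll := ((ev1.and ev2).and (ev3.and ev4)).and ((ev5.and ev6).and ev7)
    obtain ⟨L₀, hL₀⟩ := Filter.eventually_atTop.mp evAll
    refine ⟨460, by norm_num, max L₀ 2, ?_⟩
    intro L hL h2
    obtain ⟨⟨⟨e1, e2⟩, ⟨e3, e4⟩⟩, ⟨⟨e5, e6⟩, e7⟩⟩ :=
      hL₀ L (le_trans (le_max_left _ _) hL)
    haveI : NeZero L := ⟨by omega⟩
    exact S0A.final_est k c hk1 hc2 L h2 e1 e2 e3 e4 e5 e6 e7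
  · refine ⟨1, one_pos, 2, ?_⟩
    intro L hL h2
    haveI : NeZero L := ⟨by omega⟩
    have h1 := S0A.tv_le_one (L := L) (k * Real.log L) (c * Real.log L / L)
    have hL1 : (1:ℝ) ≤ (L:ℝ) := by exact_mod_cast (by omega : 1 ≤ L)
    have hL0 : (0:ℝ) < (L:ℝ) := by linarith
    rcases not_and_or.mp hkc with hk' | hc'
    · push_neg at hk'
      have hterm : (1:ℝ) ≤ (L:ℝ)^(-(2*k-2)) := by
        calc (1:ℝ) = (L:ℝ)^(0:ℝ) := (Real.rpow_zero _).symm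
          _ ≤ (L:ℝ)^(-(2*k-2)) :=
            Real.rpow_le_rpow_of_exponent_le hL1 (by linarith)
      have hpos : (0:ℝ) ≤ (L:ℝ)^(-(c/2-1)) := Real.rpow_nonneg hL0.le _
      linarith
    · push_neg at hc'
      have hterm : (1:ℝ) ≤ (L:ℝ)^(-(c/2-1)) := by
        calc (1:ℝ) = (L:ℝ)^(0:ℝ) := (Real.rpow_zero _).symm
          _ ≤ (L:ℝ)^(-(c/2-1)) :=
            Real.rpow_le_rpow_of_exponent_le hL1 (by linarith)
      have hpos : (0:ℝ) ≤ (L:ℝ)^(-(2*k-2)) := Real.rpow_nonneg hL0.le _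
      linarith
end
end

section
/- For every L ≥ 2, all J, q > 0, and every configuration σ ∈ S, the weak symmetry condition holds: ∑_{τ∈S} e^{−H(σ,τ)} = ∑_{τ∈S} e^{−H(τ,σ)}, even though in general H(σ,τ) ≠ H(τ,σ). -/
open Real Filter MeasureTheory

noncomputable section

/-- constants for the local factor identity -/
def cA (J q : ℝ) : ℝ :=
  Real.log (Real.exp (2*J+q) + Real.exp (-(2*J+q))) / 4
    + Real.log (Real.exp (2*J-q) + Real.exp (-(2*J-q))) / 4
    + Real.log (Real.exp q + Real.exp (-q)) / 2

def cB (J q : ℝ) : ℝ :=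
  Real.log (Real.exp (2*J+q) + Real.exp (-(2*J+q))) / 4
    + Real.log (Real.exp (2*J-q) + Real.exp (-(2*J-q))) / 4
    - Real.log (Real.exp q + Real.exp (-q)) / 2

def cC (J q : ℝ) : ℝ :=
  Real.log (Real.exp (2*J+q) + Real.exp (-(2*J+q))) / 4
    - Real.log (Real.exp (2*J-q) + Real.exp (-(2*J-q))) / 4

lemma key (J q : ℝ) (s t u : Bool) :
    Real.exp (J * spin s + J * spin t + q * spin u)
      + Real.exp (-(J * spin s + J * spin t + q * spin u))
    = Real.exp (cA J q + cB J q * (spin s * spin t)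
        + cC J q * (spin s * spin u + spin t * spin u)) := by
  have h1 : (0:ℝ) < Real.exp (2*J+q) + Real.exp (-(2*J+q)) := by positivity
  have h2 : (0:ℝ) < Real.exp (2*J-q) + Real.exp (-(2*J-q)) := by positivity
  have h3 : (0:ℝ) < Real.exp q + Real.exp (-q) := by positivity
  cases s <;> cases t <;> cases u <;>
    simp only [spin, if_true, if_false, Bool.false_eq_true]
  · rw [show cA J q + cB J q * ((-1:ℝ) * -1) + cC J q * ((-1:ℝ) * -1 + -1 * -1)
        = Real.log (Real.exp (2*J+q) + Real.exp (-(2*J+q))) by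
          unfold cA cB cC; ring, Real.exp_log h1,
      show J * (-1:ℝ) + J * -1 + q * -1 = -(2*J+q) by ring, neg_neg, add_comm]
  · rw [show cA J q + cB J q * ((-1:ℝ) * -1) + cC J q * ((-1:ℝ) * 1 + -1 * 1)
        = Real.log (Real.exp (2*J-q) + Real.exp (-(2*J-q))) by
          unfold cA cB cC; ring, Real.exp_log h2,
      show J * (-1:ℝ) + J * -1 + q * 1 = -(2*J-q) by ring, neg_neg, add_comm]
  · rw [show cA J q + cB J q * ((-1:ℝ) * 1) + cC J q * ((-1:ℝ) * -1 + 1 * -1)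
        = Real.log (Real.exp q + Real.exp (-q)) by
          unfold cA cB cC; ring, Real.exp_log h3,
      show J * (-1:ℝ) + J * 1 + q * -1 = -q by ring, neg_neg, add_comm]
  · rw [show cA J q + cB J q * ((-1:ℝ) * 1) + cC J q * ((-1:ℝ) * 1 + 1 * 1)
        = Real.log (Real.exp q + Real.exp (-q)) by
          unfold cA cB cC; ring, Real.exp_log h3,
      show J * (-1:ℝ) + J * 1 + q * 1 = q by ring]
  · rw [show cA J q + cB J q * ((1:ℝ) * -1) + cC J q * ((1:ℝ) * -1 + -1 * -1)
        = Real.log (Real.exp q + Real.exp (-q)) by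
          unfold cA cB cC; ring, Real.exp_log h3,
      show J * (1:ℝ) + J * -1 + q * -1 = -q by ring, neg_neg, add_comm]
  · rw [show cA J q + cB J q * ((1:ℝ) * -1) + cC J q * ((1:ℝ) * 1 + -1 * 1)
        = Real.log (Real.exp q + Real.exp (-q)) by
          unfold cA cB cC; ring, Real.exp_log h3,
      show J * (1:ℝ) + J * -1 + q * 1 = q by ring]
  · rw [show cA J q + cB J q * ((1:ℝ) * 1) + cC J q * ((1:ℝ) * -1 + 1 * -1)
        = Real.log (Real.exp (2*J-q) + Real.exp (-(2*J-q))) by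
          unfold cA cB cC; ring, Real.exp_log h2,
      show J * (1:ℝ) + J * 1 + q * -1 = 2*J-q by ring]
  · rw [show cA J q + cB J q * ((1:ℝ) * 1) + cC J q * ((1:ℝ) * 1 + 1 * 1)
        = Real.log (Real.exp (2*J+q) + Real.exp (-(2*J+q))) by
          unfold cA cB cC; ring, Real.exp_log h1,
      show J * (1:ℝ) + J * 1 + q * 1 = 2*J+q by ring]

lemma sumProd (L : ℕ) [NeZero L] (c : Site L → ℝ) :
    ∑ τ : Cfg L, Real.exp (∑ y : Site L, c y * spin (τ y))
      = ∏ y : Site L, (Real.exp (c y) + Real.exp (-(c y))) := by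
  symm
  calc ∏ y : Site L, (Real.exp (c y) + Real.exp (-(c y)))
      = ∏ y : Site L, ∑ b : Bool, Real.exp (c y * spin b) := by
        refine Finset.prod_congr rfl fun y _ => ?_
        rw [Fintype.sum_bool]
        simp [spin]
    _ = ∑ τ ∈ Fintype.piFinset (fun _ : Site L => Finset.univ),
          ∏ y : Site L, Real.exp (c y * spin (τ y)) :=
        Finset.prod_univ_sum (fun _ => Finset.univ) (fun y b => Real.exp (c y * spin b))
    _ = ∑ τ : Cfg L, Real.exp (∑ y : Site L, c y * spin (τ y)) := by
        rw [Fintype.piFinset_univ]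
        exact Finset.sum_congr rfl fun τ _ => (Real.exp_sum _ _).symm

/-- For every `L ≥ 2`, `J, q > 0` and every configuration `σ`, the weak
symmetry condition `∑_τ e^{−H(σ,τ)} = ∑_τ e^{−H(τ,σ)}` holds. -/
theorem stmt4 (L : ℕ) [NeZero L] (hL : 2 ≤ L) (J q : ℝ) (hJ : 0 < J) (hq : 0 < q)
    (σ : Cfg L) :
    ∑ τ : Cfg L, Real.exp (-(pairH L J q σ τ)) =
      ∑ τ : Cfg L, Real.exp (-(pairH L J q τ σ)) := by
  classical
  set cL : Site L → ℝ := fun y =>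
    J * spin (σ (dnN y)) + J * spin (σ (lfN y)) + q * spin (σ y) with hcL
  set cR : Site L → ℝ := fun y =>
    J * spin (σ (upN y)) + J * spin (σ (rtN y)) + q * spin (σ y) with hcR
  have h1 : ∀ τ : Cfg L, -(pairH L J q σ τ) = ∑ y : Site L, cL y * spin (τ y) := by
    intro τ
    unfold pairH
    rw [neg_neg]
    have e1 : ∑ x : Site L, J * spin (σ x) * spin (τ (upN x))
        = ∑ y : Site L, J * spin (σ (dnN y)) * spin (τ y) := by
      refine Fintype.sum_equiv (Equiv.prodCongr (Equiv.refl _) (Equiv.addRight 1)) _ _ ?_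
      intro x
      have hu : dnN ((Equiv.prodCongr (Equiv.refl (ZMod L)) (Equiv.addRight (1 : ZMod L))) x) = x := by
        simp [dnN, Prod.map]
      have hv : ((Equiv.prodCongr (Equiv.refl (ZMod L)) (Equiv.addRight (1 : ZMod L))) x) = upN x := by
        simp [upN, Prod.map]
      rw [hu, hv]
    have e2 : ∑ x : Site L, J * spin (σ x) * spin (τ (rtN x))
        = ∑ y : Site L, J * spin (σ (lfN y)) * spin (τ y) := by
      refine Fintype.sum_equiv (Equiv.prodCongr (Equiv.addRight 1) (Equiv.refl _)) _ _ ?_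
      intro x
      have hu : lfN ((Equiv.prodCongr (Equiv.addRight (1 : ZMod L)) (Equiv.refl (ZMod L))) x) = x := by
        simp [lfN, Prod.map]
      have hv : ((Equiv.prodCongr (Equiv.addRight (1 : ZMod L)) (Equiv.refl (ZMod L))) x) = rtN x := by
        simp [rtN, Prod.map]
      rw [hu, hv]
    calc ∑ x : Site L, (J * spin (σ x) * (spin (τ (upN x)) + spin (τ (rtN x)))
          + q * spin (σ x) * spin (τ x))
        = (∑ x : Site L, J * spin (σ x) * spin (τ (upN x)))
          + (∑ x : Site L, J * spin (σ x) * spin (τ (rtN x)))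
          + ∑ x : Site L, q * spin (σ x) * spin (τ x) := by
          rw [← Finset.sum_add_distrib, ← Finset.sum_add_distrib]
          exact Finset.sum_congr rfl fun x _ => by ring
      _ = (∑ y : Site L, J * spin (σ (dnN y)) * spin (τ y))
          + (∑ y : Site L, J * spin (σ (lfN y)) * spin (τ y))
          + ∑ y : Site L, q * spin (σ y) * spin (τ y) := by rw [e1, e2]
      _ = ∑ y : Site L, cL y * spin (τ y) := by
          rw [← Finset.sum_add_distrib, ← Finset.sum_add_distrib]
          exact Finset.sum_congr rfl fun y _ => by simp only [hcL]; ring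
  have h2 : ∀ τ : Cfg L, -(pairH L J q τ σ) = ∑ y : Site L, cR y * spin (τ y) := by
    intro τ
    unfold pairH
    rw [neg_neg]
    exact Finset.sum_congr rfl fun y _ => by simp only [hcR]; ring
  simp_rw [h1, h2, sumProd L cL, sumProd L cR]
  have kL : ∀ y : Site L, Real.exp (cL y) + Real.exp (-(cL y))
      = Real.exp (cA J q + cB J q * (spin (σ (dnN y)) * spin (σ (lfN y)))
          + cC J q * (spin (σ (dnN y)) * spin (σ y) + spin (σ (lfN y)) * spin (σ y))) :=
    fun y => key J q (σ (dnN y)) (σ (lfN y)) (σ y)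
  have kR : ∀ y : Site L, Real.exp (cR y) + Real.exp (-(cR y))
      = Real.exp (cA J q + cB J q * (spin (σ (upN y)) * spin (σ (rtN y)))
          + cC J q * (spin (σ (upN y)) * spin (σ y) + spin (σ (rtN y)) * spin (σ y))) :=
    fun y => key J q (σ (upN y)) (σ (rtN y)) (σ y)
  simp_rw [kL, kR, ← Real.exp_sum]
  congr 1
  have e1 : ∑ y : Site L, spin (σ (dnN y)) * spin (σ (lfN y))
      = ∑ y : Site L, spin (σ (upN y)) * spin (σ (rtN y)) := by
    refine Fintype.sum_equiv (Equiv.prodCongr (Equiv.subRight 1) (Equiv.subRight 1)) _ _ ?_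
    intro x
    have hu : upN ((Equiv.prodCongr (Equiv.subRight (1:ZMod L)) (Equiv.subRight (1:ZMod L))) x) = lfN x := by
      simp [upN, lfN, Prod.map]
    have hv : rtN ((Equiv.prodCongr (Equiv.subRight (1:ZMod L)) (Equiv.subRight (1:ZMod L))) x) = dnN x := by
      simp [rtN, dnN, Prod.map]
    rw [hu, hv, mul_comm]
  have e2 : ∑ y : Site L, spin (σ (dnN y)) * spin (σ y)
      = ∑ y : Site L, spin (σ (upN y)) * spin (σ y) := by
    refine Fintype.sum_equiv (Equiv.prodCongr (Equiv.refl _) (Equiv.subRight 1)) _ _ ?_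
    intro x
    have hu : upN ((Equiv.prodCongr (Equiv.refl (ZMod L)) (Equiv.subRight (1:ZMod L))) x) = x := by
      simp [upN, Prod.map]
    have hv : ((Equiv.prodCongr (Equiv.refl (ZMod L)) (Equiv.subRight (1:ZMod L))) x) = dnN x := by
      simp [dnN, Prod.map]
    rw [hu, hv, mul_comm]
  have e3 : ∑ y : Site L, spin (σ (lfN y)) * spin (σ y)
      = ∑ y : Site L, spin (σ (rtN y)) * spin (σ y) := by
    refine Fintype.sum_equiv (Equiv.prodCongr (Equiv.subRight 1) (Equiv.refl _)) _ _ ?_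
    intro x
    have hu : rtN ((Equiv.prodCongr (Equiv.subRight (1:ZMod L)) (Equiv.refl (ZMod L))) x) = x := by
      simp [rtN, Prod.map]
    have hv : ((Equiv.prodCongr (Equiv.subRight (1:ZMod L)) (Equiv.refl (ZMod L))) x) = lfN x := by
      simp [lfN, Prod.map]
    rw [hu, hv, mul_comm]
  calc ∑ y : Site L, (cA J q + cB J q * (spin (σ (dnN y)) * spin (σ (lfN y)))
          + cC J q * (spin (σ (dnN y)) * spin (σ y) + spin (σ (lfN y)) * spin (σ y)))
      = (∑ _y : Site L, cA J q)
        + cB J q * ∑ y : Site L, spin (σ (dnN y)) * spin (σ (lfN y))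
        + cC J q * ((∑ y : Site L, spin (σ (dnN y)) * spin (σ y))
            + ∑ y : Site L, spin (σ (lfN y)) * spin (σ y)) := by
        rw [Finset.sum_add_distrib, Finset.sum_add_distrib, ← Finset.mul_sum,
          ← Finset.mul_sum, ← Finset.sum_add_distrib]
    _ = (∑ _y : Site L, cA J q)
        + cB J q * ∑ y : Site L, spin (σ (upN y)) * spin (σ (rtN y))
        + cC J q * ((∑ y : Site L, spin (σ (upN y)) * spin (σ y))
            + ∑ y : Site L, spin (σ (rtN y)) * spin (σ y)) := by rw [e1, e2, e3]
    _ = ∑ y : Site L, (cA J q + cB J q * (spin (σ (upN y)) * spin (σ (rtN y)))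
          + cC J q * (spin (σ (upN y)) * spin (σ y) + spin (σ (rtN y)) * spin (σ y))) := by
        rw [Finset.sum_add_distrib, Finset.sum_add_distrib, ← Finset.mul_sum,
          ← Finset.mul_sum, ← Finset.sum_add_distrib]
end
end

section
/- For every L ≥ 2 and every configuration σ ∈ S on the torus Λ = (ℤ/LZ)², the number of down-left corners of its Peierls contour equals the number of up-right corners: n_dl(σ) = n_ur(σ). -/
open Real Filter MeasureTheory

noncomputable section

/-- The number of down-left corners of the Peierls contour of `σ`: sites `x` such that
both bonds `{x,x^d}` and `{x,x^l}` belong to `γ(σ)`. -/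
def nDL (L : ℕ) [NeZero L] (σ : Cfg L) : ℕ :=
  (Finset.univ.filter fun x : Site L => σ x ≠ σ (dnN x) ∧ σ x ≠ σ (lfN x)).card

/-- The number of up-right corners of the Peierls contour of `σ`: sites `x` such that
both bonds `{x,x^u}` and `{x,x^r}` belong to `γ(σ)`. -/
def nUR (L : ℕ) [NeZero L] (σ : Cfg L) : ℕ :=
  (Finset.univ.filter fun x : Site L => σ x ≠ σ (upN x) ∧ σ x ≠ σ (rtN x)).card

/-- The total length `l(σ) = |γ(σ)|` of the Peierls contour of `σ`: the number of
nearest-neighbor bonds whose endpoints carry opposite spins (each bond counted once,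
via its lower/left endpoint). -/
def contourLen (L : ℕ) [NeZero L] (σ : Cfg L) : ℕ :=
  (Finset.univ.filter fun x : Site L => σ x ≠ σ (upN x)).card +
  (Finset.univ.filter fun x : Site L => σ x ≠ σ (rtN x)).card

/-- For every `L ≥ 2` and every configuration `σ` on the torus,
the number of down-left corners of the Peierls contour equals the number of up-right
corners: `n_dl(σ) = n_ur(σ)`. -/
theorem stmt6 (L : ℕ) [NeZero L] (hL : 2 ≤ L) (σ : Cfg L) : nDL L σ = nUR L σ := by
  classical
  set s : Site L → ℤ := fun x => if σ x then 1 else -1 with hs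
  have hsq : ∀ x, s x * s x = 1 := by
    intro x; simp only [hs]; cases σ x <;> norm_num
  have key : ∀ x y z : Site L,
      ((if σ x ≠ σ y ∧ σ x ≠ σ z then (1:ℤ) else 0)) * 4
        = (1 - s x * s y) * (1 - s x * s z) := by
    intro x y z
    cases h1 : σ x <;> cases h2 : σ y <;> cases h3 : σ z <;>
      simp [hs, h1, h2, h3]
  have h1 : (nDL L σ : ℤ) * 4
      = ∑ x : Site L, (1 - s x * s (dnN x)) * (1 - s x * s (lfN x)) := by
    rw [nDL, Finset.card_filter]
    push_cast
    rw [Finset.sum_mul]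
    exact Finset.sum_congr rfl fun x _ => key x (dnN x) (lfN x)
  have h2 : (nUR L σ : ℤ) * 4
      = ∑ x : Site L, (1 - s x * s (upN x)) * (1 - s x * s (rtN x)) := by
    rw [nUR, Finset.card_filter]
    push_cast
    rw [Finset.sum_mul]
    exact Finset.sum_congr rfl fun x _ => key x (upN x) (rtN x)
  have expand : ∀ a b c : ℤ, a * a = 1 →
      (1 - a * b) * (1 - a * c) = 1 - a * b - a * c + b * c := by
    intro a b c h
    linear_combination b * c * h
  -- translation identities
  have eup : ∑ x : Site L, s x * s (upN x) = ∑ x : Site L, s x * s (dnN x) := by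
    rw [← Equiv.sum_comp (Equiv.addRight ((0, 1) : Site L))
      (fun x => s x * s (dnN x))]
    refine Finset.sum_congr rfl fun x _ => ?_
    have e1 : x + ((0, 1) : Site L) = upN x := by
      simp [upN, Prod.ext_iff]
    have e2 : dnN (x + ((0, 1) : Site L)) = x := by
      simp [dnN, Prod.ext_iff]
    simp only [Equiv.coe_addRight, e1, e1 ▸ e2]
    ring
  have ert : ∑ x : Site L, s x * s (rtN x) = ∑ x : Site L, s x * s (lfN x) := by
    rw [← Equiv.sum_comp (Equiv.addRight ((1, 0) : Site L))
      (fun x => s x * s (lfN x))]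
    refine Finset.sum_congr rfl fun x _ => ?_
    have e1 : x + ((1, 0) : Site L) = rtN x := by
      simp [rtN, Prod.ext_iff]
    have e2 : lfN (x + ((1, 0) : Site L)) = x := by
      simp [lfN, Prod.ext_iff]
    simp only [Equiv.coe_addRight, e1, e1 ▸ e2]
    ring
  have ediag : ∑ x : Site L, s (upN x) * s (rtN x)
      = ∑ x : Site L, s (dnN x) * s (lfN x) := by
    rw [← Equiv.sum_comp (Equiv.addRight ((1, 1) : Site L))
      (fun x => s (dnN x) * s (lfN x))]
    refine Finset.sum_congr rfl fun x _ => ?_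
    have e1 : dnN (x + ((1, 1) : Site L)) = rtN x := by
      simp [dnN, rtN, Prod.ext_iff]
    have e2 : lfN (x + ((1, 1) : Site L)) = upN x := by
      simp [lfN, upN, Prod.ext_iff]
    simp only [Equiv.coe_addRight, e1, e2]
    ring
  have main : (nDL L σ : ℤ) * 4 = (nUR L σ : ℤ) * 4 := by
    rw [h1, h2]
    have rw1 : ∀ x : Site L, (1 - s x * s (dnN x)) * (1 - s x * s (lfN x))
        = 1 - s x * s (dnN x) - s x * s (lfN x) + s (dnN x) * s (lfN x) :=
      fun x => expand _ _ _ (hsq x)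
    have rw2 : ∀ x : Site L, (1 - s x * s (upN x)) * (1 - s x * s (rtN x))
        = 1 - s x * s (upN x) - s x * s (rtN x) + s (upN x) * s (rtN x) :=
      fun x => expand _ _ _ (hsq x)
    simp only [rw1, rw2, Finset.sum_add_distrib, Finset.sum_sub_distrib]
    rw [eup, ert, ediag]
  have := mul_right_cancel₀ (by norm_num : (4:ℤ) ≠ 0) main
  exact_mod_cast this
end
end

section
/- For every L ≥ 2, all J, q > 0, and every configuration σ ∈ S, the PCA normalization factor has the explicit contour representation Z_σ = ∑_{τ∈S} e^{−H(σ,τ)} = 2^{L²} [cosh(2J−q)]^{n_dl(σ)} [cosh(q)]^{l(σ) − 2 n_dl(σ)} [cosh(2J+q)]^{L² − l(σ) + n_dl(σ)}. -/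
open Real Filter MeasureTheory

noncomputable section

lemma cosh_congr' {a b : ℝ} (h : a = b ∨ a = -b) : Real.cosh a = Real.cosh b := by
  rcases h with h | h <;> rw [h]; exact Real.cosh_neg b

lemma cosh_key (J q : ℝ) (s d l : Bool) :
    Real.cosh (J * spin d + J * spin l + q * spin s) =
      if s ≠ d then (if s ≠ l then Real.cosh (2*J - q) else Real.cosh q)
      else (if s ≠ l then Real.cosh q else Real.cosh (2*J + q)) := by
  cases s <;> cases d <;> cases l <;> simp [spin] <;>
    apply cosh_congr' <;> first | (left; ring1) | (right; ring1)

lemma sum_exp_spin (c : ℝ) : ∑ b : Bool, Real.exp (c * spin b) = 2 * Real.cosh c := by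
  rw [Fintype.sum_bool]
  simp [spin, Real.cosh_eq]
  ring

lemma up_dn {L : ℕ} (x : Site L) : dnN (upN x) = x := by
  cases x; simp [upN, dnN]

lemma dn_up {L : ℕ} (x : Site L) : upN (dnN x) = x := by
  cases x; simp [upN, dnN]

lemma rt_lf {L : ℕ} (x : Site L) : lfN (rtN x) = x := by
  cases x; simp [rtN, lfN]

lemma lf_rt {L : ℕ} (x : Site L) : rtN (lfN x) = x := by
  cases x; simp [rtN, lfN]

lemma upN_bij {L : ℕ} : Function.Bijective (upN (L := L)) :=
  Function.bijective_iff_has_inverse.mpr ⟨dnN, fun x => up_dn x, fun x => dn_up x⟩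

lemma rtN_bij {L : ℕ} : Function.Bijective (rtN (L := L)) :=
  Function.bijective_iff_has_inverse.mpr ⟨lfN, fun x => rt_lf x, fun x => lf_rt x⟩


/-- For every `L ≥ 2`, `J, q > 0` and every configuration `σ`,
`Z_σ = 2^{L²} cosh(2J−q)^{n_dl(σ)} cosh(q)^{l(σ)−2n_dl(σ)} cosh(2J+q)^{L²−l(σ)+n_dl(σ)}`
(the last two, possibly negative, exponents are taken as real exponents). -/
theorem stmt7 (L : ℕ) [NeZero L] (hL : 2 ≤ L) (J q : ℝ) (hJ : 0 < J) (hq : 0 < q)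
    (σ : Cfg L) :
    Zconf L J q σ =
      2 ^ (L ^ 2) * Real.cosh (2 * J - q) ^ (nDL L σ)
        * Real.cosh q ^ ((contourLen L σ : ℝ) - 2 * (nDL L σ : ℝ))
        * Real.cosh (2 * J + q) ^ (((L : ℝ) ^ 2 - contourLen L σ + nDL L σ : ℝ)) := by
  classical
  set c : Site L → ℝ := fun y => J * spin (σ (dnN y)) + J * spin (σ (lfN y)) + q * spin (σ y)
    with hc
  -- Step A : exponent rewrite
  have hH : ∀ τ : Cfg L, -(pairH L J q σ τ) = ∑ y : Site L, c y * spin (τ y) := by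
    intro τ
    unfold pairH
    rw [neg_neg]
    have h1 : ∑ x : Site L, J * spin (σ x) * spin (τ (upN x))
        = ∑ y : Site L, J * spin (σ (dnN y)) * spin (τ y) := by
      apply Fintype.sum_bijective upN upN_bij
      intro x
      rw [up_dn]
    have h2 : ∑ x : Site L, J * spin (σ x) * spin (τ (rtN x))
        = ∑ y : Site L, J * spin (σ (lfN y)) * spin (τ y) := by
      apply Fintype.sum_bijective rtN rtN_bij
      intro x
      rw [rt_lf]
    calc ∑ x : Site L, (J * spin (σ x) * (spin (τ (upN x)) + spin (τ (rtN x)))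
          + q * spin (σ x) * spin (τ x))
        = ∑ x : Site L, J * spin (σ x) * spin (τ (upN x))
          + ∑ x : Site L, J * spin (σ x) * spin (τ (rtN x))
          + ∑ x : Site L, q * spin (σ x) * spin (τ x) := by
          rw [← Finset.sum_add_distrib, ← Finset.sum_add_distrib]
          apply Finset.sum_congr rfl; intros; ring
      _ = ∑ y : Site L, J * spin (σ (dnN y)) * spin (τ y)
          + ∑ y : Site L, J * spin (σ (lfN y)) * spin (τ y)
          + ∑ y : Site L, q * spin (σ y) * spin (τ y) := by rw [h1, h2]
      _ = ∑ y : Site L, c y * spin (τ y) := by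
          rw [← Finset.sum_add_distrib, ← Finset.sum_add_distrib]
          apply Finset.sum_congr rfl; intros; rw [hc]; ring
  -- Step B : factorization
  have hZ : Zconf L J q σ = ∏ y : Site L, (2 * Real.cosh (c y)) := by
    unfold Zconf
    calc ∑ τ : Cfg L, Real.exp (-(pairH L J q σ τ))
        = ∑ τ : Cfg L, ∏ y : Site L, Real.exp (c y * spin (τ y)) := by
          apply Finset.sum_congr rfl; intro τ _
          rw [hH τ, Real.exp_sum]
      _ = ∏ y : Site L, ∑ b : Bool, Real.exp (c y * spin b) := by
          rw [Finset.prod_univ_sum (fun _ => (Finset.univ : Finset Bool))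
            (fun y b => Real.exp (c y * spin b)), Fintype.piFinset_univ]
      _ = ∏ y : Site L, (2 * Real.cosh (c y)) := by
          apply Finset.prod_congr rfl; intro y _; exact sum_exp_spin (c y)
  -- counting setup
  set P : Site L → Prop := fun x => σ x ≠ σ (dnN x) with hP
  set Q : Site L → Prop := fun x => σ x ≠ σ (lfN x) with hQ
  have hcard : Fintype.card (Site L) = L ^ 2 := by
    simp [Fintype.card_prod, ZMod.card, sq]
  set n11 := (Finset.univ.filter fun x : Site L => P x ∧ Q x).card with hn11
  set n10 := (Finset.univ.filter fun x : Site L => P x ∧ ¬ Q x).card with hn10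
  set n01 := (Finset.univ.filter fun x : Site L => ¬ P x ∧ Q x).card with hn01
  set n00 := (Finset.univ.filter fun x : Site L => ¬ P x ∧ ¬ Q x).card with hn00
  have hprod : ∏ y : Site L, Real.cosh (c y)
      = Real.cosh (2*J - q) ^ n11 * Real.cosh q ^ n10
        * (Real.cosh q ^ n01 * Real.cosh (2*J + q) ^ n00) := by
    have hcy : ∀ y : Site L, Real.cosh (c y) =
        if P y then (if Q y then Real.cosh (2*J - q) else Real.cosh q)
        else (if Q y then Real.cosh q else Real.cosh (2*J + q)) := by
      intro y
      rw [hc]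
      exact cosh_key J q (σ y) (σ (dnN y)) (σ (lfN y))
    rw [Finset.prod_congr rfl fun y _ => hcy y]
    rw [Finset.prod_ite]
    rw [Finset.prod_ite, Finset.prod_ite]
    rw [Finset.prod_const, Finset.prod_const, Finset.prod_const, Finset.prod_const]
    rw [Finset.filter_filter, Finset.filter_filter, Finset.filter_filter, Finset.filter_filter]
  -- card identities
  have hD : (Finset.univ.filter P).card = n11 + n10 := by
    rw [hn11, hn10, ← Finset.filter_filter, ← Finset.filter_filter,
      Finset.card_filter_add_card_filter_not]
  have hLc : (Finset.univ.filter Q).card = n11 + n01 := by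
    have := Finset.card_filter_add_card_filter_not
      (s := Finset.univ.filter Q) (p := P)
    rw [Finset.filter_filter, Finset.filter_filter] at this
    rw [← this, hn11, hn01]
    congr 1
    · congr 1
      exact Finset.filter_congr fun x _ => by tauto
    · congr 1
      exact Finset.filter_congr fun x _ => by tauto
  have hU : (Finset.univ.filter fun x : Site L => σ x ≠ σ (upN x)).card
      = (Finset.univ.filter P).card := by
    apply Finset.card_bij' (fun x _ => upN x) (fun x _ => dnN x)
    · intro a ha
      simp only [Finset.mem_filter, Finset.mem_univ, true_and, hP] at *
      rw [up_dn]; exact fun h => ha h.symm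
    · intro a ha
      simp only [Finset.mem_filter, Finset.mem_univ, true_and, hP] at *
      rw [dn_up]; exact fun h => ha h.symm
    · intro a _; exact up_dn a
    · intro a _; exact dn_up a
  have hR : (Finset.univ.filter fun x : Site L => σ x ≠ σ (rtN x)).card
      = (Finset.univ.filter Q).card := by
    apply Finset.card_bij' (fun x _ => rtN x) (fun x _ => lfN x)
    · intro a ha
      simp only [Finset.mem_filter, Finset.mem_univ, true_and, hQ] at *
      rw [rt_lf]; exact fun h => ha h.symm
    · intro a ha
      simp only [Finset.mem_filter, Finset.mem_univ, true_and, hQ] at *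
      rw [lf_rt]; exact fun h => ha h.symm
    · intro a _; exact rt_lf a
    · intro a _; exact lf_rt a
  have hlen : contourLen L σ = (n11 + n10) + (n11 + n01) := by
    rw [contourLen, hU, hR, hD, hLc]
  have hnDL : nDL L σ = n11 := rfl
  have htot : n11 + n10 + (n01 + n00) = L ^ 2 := by
    have h2 : (Finset.univ.filter fun x : Site L => ¬ P x).card = n01 + n00 := by
      have := Finset.card_filter_add_card_filter_not
        (s := Finset.univ.filter fun x : Site L => ¬ P x) (p := Q)
      rw [Finset.filter_filter, Finset.filter_filter] at this
      rw [← this, hn01, hn00]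
    have h3 := Finset.card_filter_add_card_filter_not
      (s := (Finset.univ : Finset (Site L))) (p := P)
    rw [hD, h2] at h3
    rw [← hcard, ← Finset.card_univ, ← h3]
  -- real exponent conversions
  have he1 : Real.cosh q ^ ((contourLen L σ : ℝ) - 2 * (nDL L σ : ℝ))
      = Real.cosh q ^ n10 * Real.cosh q ^ n01 := by
    have : ((contourLen L σ : ℝ) - 2 * (nDL L σ : ℝ)) = ((n10 + n01 : ℕ) : ℝ) := by
      rw [hlen, hnDL]; push_cast; ring
    rw [this, Real.rpow_natCast, pow_add]
  have he2 : Real.cosh (2 * J + q) ^ (((L : ℝ) ^ 2 - contourLen L σ + nDL L σ : ℝ))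
      = Real.cosh (2 * J + q) ^ n00 := by
    have : ((L : ℝ) ^ 2 - contourLen L σ + nDL L σ : ℝ) = ((n00 : ℕ) : ℝ) := by
      have hL2 : ((L : ℝ)) ^ 2 = ((n11 : ℝ) + n10 + (n01 + n00)) := by
        exact_mod_cast congrArg (fun n : ℕ => (n : ℝ)) htot.symm
      rw [hlen, hnDL, hL2]
      push_cast
      ring
    rw [this, Real.rpow_natCast]
  -- conclusion
  rw [hZ, Finset.prod_mul_distrib, Finset.prod_const, Finset.card_univ, hcard, hprod,
    he1, he2, hnDL]
  ring
end
end

section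
/- For every L ≥ 2 and all J, q > 0, setting δ = e^{−2q}, φ_x(σ) = exp(−2J(σ_x σ_{x^u} + σ_x σ_{x^r})) and f(σ) = ∏_{x∈Λ}(1 + δ φ_x(σ)), one has the identity Z_σ = e^{q L²} e^{−H_G(σ)} f(σ) for every σ ∈ S, and consequently π_PCA(σ) = π_G(σ) f(σ) / π_G(f), where π_G(f) = ∑_{σ∈S} π_G(σ) f(σ). -/
open Real Filter MeasureTheory

noncomputable section

/-- `δ = e^{−2q}`. -/
def deltaQ (q : ℝ) : ℝ := Real.exp (-(2 * q))

/-- `φ_x(σ) = exp(−2J(σ_x σ_{x^u} + σ_x σ_{x^r}))`. -/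
def phiX (L : ℕ) [NeZero L] (J : ℝ) (σ : Cfg L) (x : Site L) : ℝ :=
  Real.exp (-(2 * J * (spin (σ x) * spin (σ (upN x)) + spin (σ x) * spin (σ (rtN x)))))

/-- `f(σ) = ∏_x (1 + δ φ_x(σ))`. -/
def fDens (L : ℕ) [NeZero L] (J q : ℝ) (σ : Cfg L) : ℝ :=
  ∏ x : Site L, (1 + deltaQ q * phiX L J σ x)

namespace Stmt8Aux
set_option linter.unusedSectionVars false
variable {L : ℕ} [NeZero L]

lemma spin_sq (b : Bool) : spin b * spin b = 1 := by cases b <;> simp [spin]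
lemma spin_cases (b : Bool) : spin b = 1 ∨ spin b = -1 := by cases b <;> simp [spin]

@[simp] lemma dnN_upN (x : Site L) : dnN (upN x) = x := by simp [upN, dnN]
@[simp] lemma upN_dnN (x : Site L) : upN (dnN x) = x := by simp [upN, dnN]
@[simp] lemma lfN_rtN (x : Site L) : lfN (rtN x) = x := by simp [rtN, lfN]
@[simp] lemma rtN_lfN (x : Site L) : rtN (lfN x) = x := by simp [rtN, lfN]
lemma dnN_rtN (x : Site L) : dnN (rtN x) = rtN (dnN x) := rfl

def upE : Site L ≃ Site L := ⟨upN, dnN, dnN_upN, upN_dnN⟩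
def rtE : Site L ≃ Site L := ⟨rtN, lfN, lfN_rtN, rtN_lfN⟩
def dnE : Site L ≃ Site L := ⟨dnN, upN, upN_dnN, dnN_upN⟩
@[simp] lemma upE_apply (x : Site L) : upE x = upN x := rfl
@[simp] lemma rtE_apply (x : Site L) : rtE x = rtN x := rfl
@[simp] lemma dnE_apply (x : Site L) : dnE x = dnN x := rfl

lemma sum_upN (f : Site L → ℝ) : ∑ x : Site L, f (upN x) = ∑ x : Site L, f x :=
  Equiv.sum_comp upE f
lemma sum_rtN (f : Site L → ℝ) : ∑ x : Site L, f (rtN x) = ∑ x : Site L, f x :=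
  Equiv.sum_comp rtE f
lemma sum_dnN (f : Site L → ℝ) : ∑ x : Site L, f (dnN x) = ∑ x : Site L, f x :=
  Equiv.sum_comp dnE f

lemma card_site : Fintype.card (Site L) = L * L := by simp [ZMod.card]

/-- The coefficient of `τ_y` after regrouping the pair Hamiltonian. -/
def aC (L : ℕ) [NeZero L] (J q : ℝ) (σ : Cfg L) (y : Site L) : ℝ :=
  q * spin (σ y) + J * spin (σ (dnN y)) + J * spin (σ (lfN y))

lemma negPairH (J q : ℝ) (σ τ : Cfg L) :
    -(pairH L J q σ τ) = ∑ y : Site L, spin (τ y) * aC L J q σ y := by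
  unfold pairH aC
  rw [neg_neg]
  have h1 : ∀ x : Site L,
      J * spin (σ x) * (spin (τ (upN x)) + spin (τ (rtN x))) + q * spin (σ x) * spin (τ x)
      = J * spin (σ x) * spin (τ (upN x)) + (J * spin (σ x) * spin (τ (rtN x))
        + q * spin (σ x) * spin (τ x)) := fun x => by ring
  have h2 : ∀ y : Site L,
      spin (τ y) * (q * spin (σ y) + J * spin (σ (dnN y)) + J * spin (σ (lfN y)))
      = J * spin (σ (dnN y)) * spin (τ y) + (J * spin (σ (lfN y)) * spin (τ y)
        + q * spin (σ y) * spin (τ y)) := fun y => by ring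
  simp only [h1, h2]
  rw [Finset.sum_add_distrib, Finset.sum_add_distrib, Finset.sum_add_distrib,
    Finset.sum_add_distrib]
  have e1 : ∑ x : Site L, J * spin (σ x) * spin (τ (upN x))
      = ∑ y : Site L, J * spin (σ (dnN y)) * spin (τ y) := by
    apply Fintype.sum_equiv upE
    intro x
    simp
  have e2 : ∑ x : Site L, J * spin (σ x) * spin (τ (rtN x))
      = ∑ y : Site L, J * spin (σ (lfN y)) * spin (τ y) := by
    apply Fintype.sum_equiv rtE
    intro x
    simp
  rw [e1, e2]

lemma Zconf_prod (J q : ℝ) (σ : Cfg L) :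
    Zconf L J q σ = ∏ y : Site L, (Real.exp (aC L J q σ y) + Real.exp (-aC L J q σ y)) := by
  unfold Zconf
  have h : ∀ τ : Cfg L, Real.exp (-(pairH L J q σ τ))
      = ∏ y : Site L, Real.exp (spin (τ y) * aC L J q σ y) := by
    intro τ; rw [negPairH, Real.exp_sum]
  simp only [h]
  rw [← Fintype.prod_sum (fun y (b : Bool) => Real.exp (spin b * aC L J q σ y))]
  refine Finset.prod_congr rfl fun y _ => ?_
  rw [Fintype.sum_bool]
  simp [spin]

lemma cosh_factor (a s : ℝ) (hs : s = 1 ∨ s = -1) :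
    Real.exp a + Real.exp (-a)
      = Real.exp (s * a) * (1 + Real.exp (-(2 * (s * a)))) := by
  rcases hs with h | h <;> subst h <;>
    rw [mul_add, mul_one, ← Real.exp_add] <;> ring_nf

/-- three-point exponential representation -/
lemma rep_lemma (J q : ℝ) :
    ∀ e : ℝ, (e = 2 ∨ e = 0 ∨ e = -2) →
      1 + Real.exp (-(2*q)) * Real.exp (-(2*J*e))
        = Real.exp ( ((e^2+2*e)/8) * Real.log (1 + Real.exp (-(2*q)) * Real.exp (-(2*J*2)))
            + ((e^2-2*e)/8) * Real.log (1 + Real.exp (-(2*q)) * Real.exp (-(2*J*(-2))))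
            + (1 - e^2/4) * Real.log (1 + Real.exp (-(2*q)))) := by
  have hA : (0:ℝ) < 1 + Real.exp (-(2*q)) * Real.exp (-(2*J*2)) := by positivity
  have hC : (0:ℝ) < 1 + Real.exp (-(2*q)) * Real.exp (-(2*J*(-2))) := by positivity
  have hB : (0:ℝ) < 1 + Real.exp (-(2*q)) := by positivity
  rintro e (rfl | rfl | rfl)
  · have h1 : (((2:ℝ))^2 + 2*2)/8 = 1 := by norm_num
    have h2 : (((2:ℝ))^2 - 2*2)/8 = 0 := by norm_num
    have h3 : 1 - ((2:ℝ))^2/4 = 0 := by norm_num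
    rw [h1, h2, h3, one_mul, zero_mul, zero_mul, add_zero, add_zero, Real.exp_log hA]
  · have h1 : (((0:ℝ))^2 + 2*0)/8 = 0 := by norm_num
    have h2 : (((0:ℝ))^2 - 2*0)/8 = 0 := by norm_num
    have h3 : 1 - ((0:ℝ))^2/4 = 1 := by norm_num
    rw [h1, h2, h3, one_mul, zero_mul, zero_mul, zero_add, zero_add, Real.exp_log hB]
    norm_num
  · have h1 : (((-2:ℝ))^2 + 2*(-2))/8 = 0 := by norm_num
    have h2 : (((-2:ℝ))^2 - 2*(-2))/8 = 1 := by norm_num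
    have h3 : 1 - ((-2:ℝ))^2/4 = 0 := by norm_num
    rw [h1, h2, h3, one_mul, zero_mul, zero_mul, zero_add, add_zero, Real.exp_log hC]

/-- products of `1 + δ e^{-2Je}` depend only on `∑ e` and `∑ e²` -/
lemma prod_onePlus_eq (J q : ℝ) (E F : Site L → ℝ)
    (hE : ∀ y, E y = 2 ∨ E y = 0 ∨ E y = -2)
    (hF : ∀ y, F y = 2 ∨ F y = 0 ∨ F y = -2)
    (h1 : ∑ y, E y = ∑ y, F y) (h2 : ∑ y, (E y)^2 = ∑ y, (F y)^2) :
    ∏ y : Site L, (1 + Real.exp (-(2*q)) * Real.exp (-(2*J*E y)))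
      = ∏ y : Site L, (1 + Real.exp (-(2*q)) * Real.exp (-(2*J*F y))) := by
  set lA := Real.log (1 + Real.exp (-(2*q)) * Real.exp (-(2*J*2))) with hlA
  set lC := Real.log (1 + Real.exp (-(2*q)) * Real.exp (-(2*J*(-2)))) with hlC
  set lB := Real.log (1 + Real.exp (-(2*q))) with hlB
  have expand : ∀ G : Site L → ℝ,
      ∑ y : Site L, (((G y)^2+2*G y)/8 * lA + ((G y)^2-2*G y)/8 * lC + (1 - (G y)^2/4) * lB)
      = (∑ y, (G y)^2) * ((lA + lC)/8 - lB/4) + (∑ y, G y) * ((lA - lC)/4)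
        + (Fintype.card (Site L) : ℝ) * lB := by
    intro G
    rw [Finset.sum_mul, Finset.sum_mul, ← Finset.sum_add_distrib]
    rw [show ((Fintype.card (Site L) : ℝ) * lB) = ∑ _y : Site L, lB by
      rw [Finset.sum_const, nsmul_eq_mul, Finset.card_univ]]
    rw [← Finset.sum_add_distrib]
    exact Finset.sum_congr rfl fun y _ => by ring
  calc ∏ y : Site L, (1 + Real.exp (-(2*q)) * Real.exp (-(2*J*E y)))
      = Real.exp (∑ y : Site L, (((E y)^2+2*E y)/8 * lA + ((E y)^2-2*E y)/8 * lC
          + (1 - (E y)^2/4) * lB)) := by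
        rw [Real.exp_sum]
        exact Finset.prod_congr rfl fun y _ => rep_lemma J q (E y) (hE y)
    _ = Real.exp (∑ y : Site L, (((F y)^2+2*F y)/8 * lA + ((F y)^2-2*F y)/8 * lC
          + (1 - (F y)^2/4) * lB)) := by rw [expand, expand, h1, h2]
    _ = _ := by
        rw [Real.exp_sum]
        exact (Finset.prod_congr rfl fun y _ => rep_lemma J q (F y) (hF y)).symm

lemma pm_sum_cases (a b c : ℝ) (ha : a = 1 ∨ a = -1) (hb : b = 1 ∨ b = -1)
    (hc : c = 1 ∨ c = -1) : a*b + a*c = 2 ∨ a*b + a*c = 0 ∨ a*b + a*c = -2 := by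
  rcases ha with rfl | rfl <;> rcases hb with rfl | rfl <;> rcases hc with rfl | rfl <;> norm_num

lemma pm_sq (a b c : ℝ) (ha : a*a = 1) (hb : b*b = 1) (hc : c*c = 1) :
    (a*b + a*c)^2 = 2 + 2*(b*c) := by
  linear_combination (b*b + 2*(b*c) + c*c) * ha + hb + hc

/-- The main identity: `Z_σ = e^{qL²} e^{−H_G(σ)} f(σ)`. -/
lemma Zconf_eq (J q : ℝ) (σ : Cfg L) :
    Zconf L J q σ = Real.exp (q * (L:ℝ)^2) * Real.exp (-(isingH L J σ)) * fDens L J q σ := by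
  rw [Zconf_prod]
  have step1 : ∀ y : Site L, Real.exp (aC L J q σ y) + Real.exp (-aC L J q σ y)
      = Real.exp (q + J*(spin (σ y) * spin (σ (dnN y))) + J*(spin (σ y) * spin (σ (lfN y))))
        * (1 + Real.exp (-(2*q)) * Real.exp (-(2*J*(spin (σ y) * spin (σ (dnN y))
            + spin (σ y) * spin (σ (lfN y)))))) := by
    intro y
    rw [cosh_factor (aC L J q σ y) (spin (σ y)) (spin_cases (σ y))]
    have key : spin (σ y) * aC L J q σ y
        = q + J*(spin (σ y) * spin (σ (dnN y))) + J*(spin (σ y) * spin (σ (lfN y))) := by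
      unfold aC; linear_combination q * spin_sq (σ y)
    rw [key]
    congr 2
    rw [← Real.exp_add]
    congr 1
    ring
  rw [Finset.prod_congr rfl (fun y _ => step1 y), Finset.prod_mul_distrib]
  congr 1
  · -- exponential factor
    rw [← Real.exp_sum, ← Real.exp_add]
    congr 1
    rw [Finset.sum_add_distrib, Finset.sum_add_distrib, Finset.sum_const, nsmul_eq_mul,
      Finset.card_univ, card_site]
    have r1 : ∑ y : Site L, J*(spin (σ y) * spin (σ (dnN y)))
        = ∑ x : Site L, J*(spin (σ (upN x)) * spin (σ x)) := by
      rw [← sum_upN (fun y => J * (spin (σ y) * spin (σ (dnN y))))]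
      simp
    have r2 : ∑ y : Site L, J*(spin (σ y) * spin (σ (lfN y)))
        = ∑ x : Site L, J*(spin (σ (rtN x)) * spin (σ x)) := by
      rw [← sum_rtN (fun y => J * (spin (σ y) * spin (σ (lfN y))))]
      simp
    rw [r1, r2]
    have hH : -(isingH L J σ) = ∑ x : Site L, (J * (spin (σ (upN x)) * spin (σ x))
        + J * (spin (σ (rtN x)) * spin (σ x))) := by
      unfold isingH
      rw [neg_mul, neg_neg, Finset.mul_sum]
      exact Finset.sum_congr rfl fun x _ => by ring
    rw [hH, Finset.sum_add_distrib]
    push_cast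
    ring
  · -- the density factor
    have hfd : fDens L J q σ = ∏ x : Site L,
        (1 + Real.exp (-(2*q)) * Real.exp (-(2*J*(spin (σ x) * spin (σ (upN x))
          + spin (σ x) * spin (σ (rtN x)))))) := by
      unfold fDens deltaQ phiX
      exact Finset.prod_congr rfl fun x _ => by norm_num
    rw [hfd]
    apply prod_onePlus_eq J q
    · intro y
      exact pm_sum_cases _ _ _ (spin_cases (σ y)) (spin_cases (σ (dnN y))) (spin_cases (σ (lfN y)))
    · intro x
      exact pm_sum_cases _ _ _ (spin_cases (σ x)) (spin_cases (σ (upN x))) (spin_cases (σ (rtN x)))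
    · rw [Finset.sum_add_distrib, Finset.sum_add_distrib]
      have t1 : ∑ y : Site L, spin (σ y) * spin (σ (dnN y))
          = ∑ x : Site L, spin (σ x) * spin (σ (upN x)) := by
        rw [← sum_upN (fun y => spin (σ y) * spin (σ (dnN y)))]
        simp [mul_comm]
      have t2 : ∑ y : Site L, spin (σ y) * spin (σ (lfN y))
          = ∑ x : Site L, spin (σ x) * spin (σ (rtN x)) := by
        rw [← sum_rtN (fun y => spin (σ y) * spin (σ (lfN y)))]
        simp [mul_comm]
      rw [t1, t2]
    · have e1 : ∀ y : Site L, (spin (σ y) * spin (σ (dnN y)) + spin (σ y) * spin (σ (lfN y)))^2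
          = 2 + 2*(spin (σ (dnN y)) * spin (σ (lfN y))) := fun y =>
        pm_sq _ _ _ (spin_sq (σ y)) (spin_sq (σ (dnN y))) (spin_sq (σ (lfN y)))
      have e2 : ∀ x : Site L, (spin (σ x) * spin (σ (upN x)) + spin (σ x) * spin (σ (rtN x)))^2
          = 2 + 2*(spin (σ (upN x)) * spin (σ (rtN x))) := fun x =>
        pm_sq _ _ _ (spin_sq (σ x)) (spin_sq (σ (upN x))) (spin_sq (σ (rtN x)))
      simp only [e1, e2]
      rw [Finset.sum_add_distrib, Finset.sum_add_distrib]
      congr 1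
      rw [← Finset.mul_sum, ← Finset.mul_sum]
      congr 1
      have u1 : ∑ y : Site L, spin (σ (dnN y)) * spin (σ (lfN y))
          = ∑ z : Site L, spin (σ (rtN (dnN z))) * spin (σ z) := by
        rw [← sum_rtN (fun y => spin (σ (dnN y)) * spin (σ (lfN y)))]
        simp [dnN_rtN]
      have u2 : ∑ x : Site L, spin (σ (upN x)) * spin (σ (rtN x))
          = ∑ z : Site L, spin (σ z) * spin (σ (rtN (dnN z))) := by
        rw [← sum_dnN (fun x => spin (σ (upN x)) * spin (σ (rtN x)))]
        simp
      rw [u1, u2]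
      exact Finset.sum_congr rfl fun z _ => by ring

lemma fDens_pos (J q : ℝ) (σ : Cfg L) : 0 < fDens L J q σ := by
  unfold fDens deltaQ phiX
  exact Finset.prod_pos fun x _ => by positivity

end Stmt8Aux

/-- For every `L ≥ 2` and `J, q > 0`: `Z_σ = e^{qL²} e^{−H_G(σ)} f(σ)`
for every `σ`, and consequently `π_PCA(σ) = π_G(σ) f(σ) / π_G(f)`. -/


theorem stmt8 (L : ℕ) [NeZero L] (hL : 2 ≤ L) (J q : ℝ) (hJ : 0 < J) (hq : 0 < q) :
    (∀ σ : Cfg L,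
      Zconf L J q σ = Real.exp (q * (L : ℝ) ^ 2) * Real.exp (-(isingH L J σ)) * fDens L J q σ) ∧
    (∀ σ : Cfg L,
      piPCA L J q σ =
        piG L J σ * fDens L J q σ / (∑ τ : Cfg L, piG L J τ * fDens L J q τ)) := by
  have key : ∀ σ : Cfg L,
      Zconf L J q σ = Real.exp (q * (L : ℝ) ^ 2) * Real.exp (-(isingH L J σ)) * fDens L J q σ :=
    fun σ => Stmt8Aux.Zconf_eq J q σ
  refine ⟨key, fun σ => ?_⟩
  have hfpos : ∀ τ : Cfg L, 0 < fDens L J q τ := fun τ => Stmt8Aux.fDens_pos J q τ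
  have hS : 0 < ∑ τ : Cfg L, Real.exp (-(isingH L J τ)) * fDens L J q τ :=
    Finset.sum_pos (fun τ _ => mul_pos (Real.exp_pos _) (hfpos τ)) Finset.univ_nonempty
  have hZg : 0 < Zg L J := Finset.sum_pos (fun τ _ => Real.exp_pos _) Finset.univ_nonempty
  have hZpca : Zpca L J q = Real.exp (q * (L : ℝ) ^ 2)
      * ∑ τ : Cfg L, Real.exp (-(isingH L J τ)) * fDens L J q τ := by
    unfold Zpca
    rw [Finset.mul_sum]
    exact Finset.sum_congr rfl fun τ _ => by rw [key τ]; ring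
  have hsum : ∑ τ : Cfg L, piG L J τ * fDens L J q τ
      = (∑ τ : Cfg L, Real.exp (-(isingH L J τ)) * fDens L J q τ) / Zg L J := by
    unfold piG
    rw [Finset.sum_div]
    exact Finset.sum_congr rfl fun τ _ => by ring
  rw [hsum]
  unfold piPCA piG
  rw [key σ, hZpca]
  have hexp : Real.exp (q * (L : ℝ) ^ 2) ≠ 0 := (Real.exp_pos _).ne'
  field_simp
end
end
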